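/- arXiv:2105.06821 — 6 statements merged into one kernel-verified Lean document; each statement's English description precedes it below -/
import Mathlib

section
/- Let 0 < r₁ < r₂, let z₀ ∈ ℂ, and let f be holomorphic on an open set containing the closed disk D̄(z₀, r₂), with |f(z)| ≤ M₁ and |f'(z)| ≤ M₂ for all z on the boundary circle |z − z₀| = r₂. Let k be a nonnegative integer. Then for every z with |z − z₀| ≤ r₁, the Taylor remainder T_k(z) := f(z) − Σ_{n=0}^{k} (f^{(n)}(z₀)/n!)·(z − z₀)ⁿ satisfies both |T_k(z)| ≤ M₁·|z − z₀|^{k+1}/((1 − r₁/r₂)·r₂^{k+1}) and |T_k(z)| ≤ M₂·|z − z₀|^{k+1}/((k+1)·(1 − r₁/r₂)·r₂^{k}). -/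
open Real

lemma coeff_bound_aux {f : ℂ → ℂ} {z₀ : ℂ} {r M : ℝ} (hr : 0 < r)
    (hf : DifferentiableOn ℂ f (Metric.closedBall z₀ r))
    (hM : ∀ z ∈ Metric.sphere z₀ r, ‖f z‖ ≤ M) (n : ℕ) :
    ‖iteratedDeriv n f z₀‖ ≤ n.factorial * (M / r ^ n) := by
  lift r to NNReal using hr.le with R hR
  have hR0 : 0 < R := by exact_mod_cast hr
  have h := hf.hasFPowerSeriesOnBall hR0
  set p := cauchyPowerSeries f z₀ R with hp
  have hcont : Continuous fun θ : ℝ => ‖f (circleMap z₀ R θ)‖ := by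
    refine (hf.continuousOn.comp_continuous (continuous_circleMap _ _) ?_).norm
    intro θ
    exact Metric.sphere_subset_closedBall (circleMap_mem_sphere z₀ hr.le θ)
  have hint : (∫ θ in (0:ℝ)..(2*π), ‖f (circleMap z₀ R θ)‖) ≤ 2 * π * M := by
    have := intervalIntegral.integral_mono_on (a := (0:ℝ)) (b := 2*π)
      Real.two_pi_pos.le (hcont.intervalIntegrable _ _) (intervalIntegrable_const (μ := MeasureTheory.volume))
      (fun θ _ => hM _ (circleMap_mem_sphere z₀ hr.le θ))
    simpa using this
  have hpn : ‖p n‖ ≤ M / (R : ℝ) ^ n := by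
    have h1 := norm_cauchyPowerSeries_le f z₀ R n
    have h2 : ((2 * π)⁻¹ * ∫ θ : ℝ in (0)..2 * π, ‖f (circleMap z₀ R θ)‖) * |(R:ℝ)|⁻¹ ^ n
        ≤ M / (R:ℝ) ^ n := by
      rw [abs_of_nonneg (R.coe_nonneg), inv_pow, div_eq_mul_inv]
      refine mul_le_mul_of_nonneg_right ?_ (by positivity)
      calc (2 * π)⁻¹ * ∫ θ : ℝ in (0)..2 * π, ‖f (circleMap z₀ R θ)‖
          ≤ (2 * π)⁻¹ * (2 * π * M) := by
            gcongr
        _ = M := by field_simp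
    exact h1.trans h2
  have h2 : iteratedDeriv n f z₀ = n.factorial • (p n fun _ => (1:ℂ)) := by
    rw [iteratedDeriv_eq_iteratedFDeriv]
    exact (h.factorial_smul 1 n).symm
  rw [h2, nsmul_eq_mul, norm_mul, Complex.norm_natCast]
  gcongr
  calc ‖p n fun _ => (1:ℂ)‖ ≤ ‖p n‖ * ∏ _i : Fin n, ‖(1:ℂ)‖ := (p n).le_opNorm _
    _ = ‖p n‖ := by simp
    _ ≤ M / (R:ℝ) ^ n := hpn

/-- Taylor's formula for holomorphic functions with explicit remainder bounds. -/
theorem taylor_remainder_bounds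
    (r₁ r₂ : ℝ) (hr₁ : 0 < r₁) (hr₁₂ : r₁ < r₂)
    (z₀ : ℂ) (f : ℂ → ℂ)
    (U : Set ℂ) (hUopen : IsOpen U) (hUsub : Metric.closedBall z₀ r₂ ⊆ U)
    (hf : DifferentiableOn ℂ f U)
    (M₁ M₂ : ℝ)
    (hM₁ : ∀ z ∈ Metric.sphere z₀ r₂, ‖f z‖ ≤ M₁)
    (hM₂ : ∀ z ∈ Metric.sphere z₀ r₂, ‖deriv f z‖ ≤ M₂)
    (k : ℕ) (z : ℂ) (hz : ‖z - z₀‖ ≤ r₁) :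
    ‖f z - ∑ n ∈ Finset.range (k+1),
        iteratedDeriv n f z₀ / (n.factorial : ℂ) * (z - z₀)^n‖
      ≤ M₁ * ‖z - z₀‖^(k+1) / ((1 - r₁/r₂) * r₂^(k+1)) ∧
    ‖f z - ∑ n ∈ Finset.range (k+1),
        iteratedDeriv n f z₀ / (n.factorial : ℂ) * (z - z₀)^n‖
      ≤ M₂ * ‖z - z₀‖^(k+1) / ((k+1) * (1 - r₁/r₂) * r₂^k) := by
  have hr₂ : (0:ℝ) < r₂ := hr₁.trans hr₁₂
  set w := z - z₀ with hw
  set ρ := ‖w‖ with hρ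
  have hρ0 : 0 ≤ ρ := norm_nonneg _
  set g := fun n : ℕ => ((n.factorial : ℂ))⁻¹ • w ^ n • iteratedDeriv n f z₀ with hg
  have hfball : DifferentiableOn ℂ f (Metric.ball z₀ r₂) :=
    (hf.mono hUsub).mono Metric.ball_subset_closedBall
  have hzball : z ∈ Metric.ball z₀ r₂ := by
    rw [Metric.mem_ball, dist_eq_norm]; exact lt_of_le_of_lt hz hr₁₂
  have hS : HasSum g (f z) := Complex.hasSum_taylorSeries_on_ball hfball hzball
  have hsum_eq : ∑ n ∈ Finset.range (k+1),
      iteratedDeriv n f z₀ / (n.factorial : ℂ) * w ^ n = ∑ n ∈ Finset.range (k+1), g n := by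
    refine Finset.sum_congr rfl fun n _ => ?_
    simp only [hg, smul_eq_mul]
    ring
  rw [hsum_eq]
  have hT : HasSum (fun n => g (n + (k+1))) (f z - ∑ i ∈ Finset.range (k+1), g i) :=
    (hasSum_nat_add_iff' (k+1)).mpr hS
  set q : ℝ := r₁ / r₂ with hq
  have hq0 : 0 ≤ q := by positivity
  have hq1 : q < 1 := (div_lt_one hr₂).mpr hr₁₂
  have hq1' : (0:ℝ) < 1 - q := by linarith
  have key : ∀ C : ℝ, (∀ n, ‖g (n + (k+1))‖ ≤ C * q ^ n) →
      ‖f z - ∑ i ∈ Finset.range (k+1), g i‖ ≤ C * (1 - q)⁻¹ := by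
    intro C hC
    have hgeo := (hasSum_geometric_of_lt_one hq0 hq1).mul_left C
    have := tsum_of_norm_bounded hgeo hC
    rwa [hT.tsum_eq] at this
  have hsph : (z₀ + r₂ : ℂ) ∈ Metric.sphere z₀ r₂ := by
    simp [Complex.dist_eq, abs_of_nonneg hr₂.le]
  have hM₁0 : 0 ≤ M₁ := le_trans (norm_nonneg _) (hM₁ _ hsph)
  have hM₂0 : 0 ≤ M₂ := le_trans (norm_nonneg _) (hM₂ _ hsph)
  have hA : ∀ n, ‖iteratedDeriv n f z₀‖ ≤ n.factorial * (M₁ / r₂ ^ n) :=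
    fun n => coeff_bound_aux hr₂ (hf.mono hUsub) hM₁ n
  have hf' : DifferentiableOn ℂ (deriv f) (Metric.closedBall z₀ r₂) :=
    (((hf.analyticOnNhd hUopen).deriv).differentiableOn).mono hUsub
  have hB : ∀ n : ℕ, ‖iteratedDeriv (n+1) f z₀‖ ≤ n.factorial * (M₂ / r₂ ^ n) := by
    intro n
    rw [iteratedDeriv_succ']
    exact coeff_bound_aux hr₂ hf' hM₂ n
  have hgnorm : ∀ m : ℕ, ‖g m‖ = ((m.factorial : ℝ))⁻¹ * (ρ ^ m * ‖iteratedDeriv m f z₀‖) := by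
    intro m
    rw [hg]
    rw [norm_smul, norm_smul, norm_pow, norm_inv, Complex.norm_natCast]
  have hρq : ρ / r₂ ≤ q := by rw [hq]; gcongr
  constructor
  · -- first bound
    have hb : ∀ n, ‖g (n + (k+1))‖ ≤ (M₁ * (ρ/r₂)^(k+1)) * q ^ n := by
      intro n
      rw [hgnorm]
      calc ((n + (k+1)).factorial : ℝ)⁻¹ * (ρ ^ (n + (k+1)) * ‖iteratedDeriv (n + (k+1)) f z₀‖)
          ≤ ((n + (k+1)).factorial : ℝ)⁻¹ *
            (ρ ^ (n + (k+1)) * ((n + (k+1)).factorial * (M₁ / r₂ ^ (n + (k+1))))) := by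
            gcongr
            exact hA _
        _ = (M₁ * (ρ/r₂)^(k+1)) * (ρ/r₂) ^ n := by
            rw [div_pow, div_pow]
            field_simp [Nat.factorial_ne_zero]
            rw [pow_add, pow_add]
            ring
        _ ≤ (M₁ * (ρ/r₂)^(k+1)) * q ^ n := by
            have : (0:ℝ) ≤ M₁ * (ρ/r₂)^(k+1) := by positivity
            gcongr
    have := key _ hb
    calc ‖f z - ∑ i ∈ Finset.range (k+1), g i‖ ≤ (M₁ * (ρ/r₂)^(k+1)) * (1 - q)⁻¹ := this
      _ = M₁ * ρ^(k+1) / ((1 - q) * r₂^(k+1)) := by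
          have e1 : (1 - q) ≠ 0 := hq1'.ne'
          have e2 : r₂ ≠ 0 := hr₂.ne'
          rw [div_pow]
          field_simp
  · -- second bound
    have hb : ∀ n, ‖g (n + (k+1))‖ ≤ (M₂ * ρ^(k+1) / ((k+1) * r₂^k)) * q ^ n := by
      intro n
      rw [hgnorm]
      have hfact : ((n + (k+1)).factorial : ℝ) = (n + k + 1) * ((n+k).factorial : ℝ) := by
        rw [show n + (k+1) = (n + k) + 1 by ring, Nat.factorial_succ]
        push_cast
        ring
      calc ((n + (k+1)).factorial : ℝ)⁻¹ * (ρ ^ (n + (k+1)) * ‖iteratedDeriv (n + (k+1)) f z₀‖)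
          ≤ ((n + (k+1)).factorial : ℝ)⁻¹ *
            (ρ ^ (n + (k+1)) * ((n+k).factorial * (M₂ / r₂ ^ (n+k)))) := by
            gcongr
            exact hB (n + k)
        _ = M₂ * ρ^(n + (k+1)) / ((n + k + 1) * r₂^(n+k)) := by
            rw [hfact]
            have h1 : ((n+k).factorial : ℝ) ≠ 0 := by positivity
            have h2 : ((n:ℝ) + k + 1) ≠ 0 := by positivity
            field_simp
        _ ≤ M₂ * ρ^(n + (k+1)) / ((k + 1) * r₂^(n+k)) := by
            refine div_le_div_of_nonneg_left (by positivity) (by positivity) ?_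
            have hn : (0:ℝ) ≤ (n:ℝ) := Nat.cast_nonneg n
            gcongr
            linarith
        _ = (M₂ * ρ^(k+1) / ((k+1) * r₂^k)) * (ρ/r₂) ^ n := by
            have e1 : ((k:ℝ) + 1) ≠ 0 := by positivity
            have e2 : r₂ ≠ 0 := hr₂.ne'
            rw [div_pow, pow_add, pow_add]
            field_simp
            ring
        _ ≤ (M₂ * ρ^(k+1) / ((k+1) * r₂^k)) * q ^ n := by
            have : (0:ℝ) ≤ M₂ * ρ^(k+1) / ((k+1) * r₂^k) := by positivity
            gcongr
    have := key _ hb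
    calc ‖f z - ∑ i ∈ Finset.range (k+1), g i‖
        ≤ (M₂ * ρ^(k+1) / ((k+1) * r₂^k)) * (1 - q)⁻¹ := this
      _ = M₂ * ρ^(k+1) / ((k+1) * (1 - q) * r₂^k) := by
          have e1 : (1 - q) ≠ 0 := hq1'.ne'
          have e2 : r₂ ≠ 0 := hr₂.ne'
          have e3 : ((k:ℝ) + 1) ≠ 0 := by positivity
          field_simp
end

section
/- Let A be a nonnegative real number and let B and a be positive real numbers. Then ∫₀^∞ exp(−A·x − (a·B/4)·x²) dx ≤ (2/a + e^{−1/a})·√2/(A + √B). -/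
set_option maxHeartbeats 1000000
open Real MeasureTheory Set Filter

lemma integral_exp_neg_mul_Ioi' (k b : ℝ) (hk : 0 < k) :
    ∫ x in Set.Ioi b, Real.exp (-(k*x)) = Real.exp (-(k*b))/k := by
  have hder : ∀ x ∈ Set.Ici b, HasDerivAt (fun y => -Real.exp (-(k*y))/k) (Real.exp (-(k*x))) x := by
    intro x _
    have h1 : HasDerivAt (fun y : ℝ => -(k*y)) (-k) x := by
      simpa using ((hasDerivAt_id x).const_mul k).fun_neg
    have h2 := (h1.exp.div_const k).fun_neg
    convert h2 using 1
    · rfl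
    · rfl
    · ext y; ring
    · field_simp
  have hint : IntegrableOn (fun x => Real.exp (-(k*x))) (Set.Ioi b) := by
    simpa [neg_mul] using exp_neg_integrableOn_Ioi b hk
  have htend : Tendsto (fun y => -Real.exp (-(k*y))/k) atTop (nhds 0) := by
    have h1 : Tendsto (fun y : ℝ => -(k*y)) atTop atBot :=
      tendsto_neg_atBot_iff.mpr (Filter.Tendsto.const_mul_atTop hk tendsto_id)
    have h2 := (Real.tendsto_exp_atBot.comp h1).div_const k |>.neg
    simpa [neg_div] using h2
  have := integral_Ioi_of_hasDerivAt_of_tendsto' hder hint htend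
  rw [this]; ring

lemma pade' (s : ℝ) (hs : 0 ≤ s) : 2 - s ≤ (2 + s) * Real.exp (-s) := by
  set F : ℝ → ℝ := fun y => (2+y)*Real.exp (-y) + y with hF
  have hder : ∀ x : ℝ, HasDerivAt F (1 - (1+x)*Real.exp (-x)) x := by
    intro x
    have h1 : HasDerivAt (fun y : ℝ => -y) (-1) x := by simpa using (hasDerivAt_id x).fun_neg
    have h2 : HasDerivAt (fun y : ℝ => Real.exp (-y)) (-Real.exp (-x)) x := by
      simpa using h1.exp
    have h3 : HasDerivAt (fun y : ℝ => (2+y)) 1 x := by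
      simpa using (hasDerivAt_id x).const_add 2
    have h4 := (h3.mul h2).fun_add (hasDerivAt_id x)
    convert h4 using 1
    · rfl
    · rfl
    · rfl
    ring
  have hmono : MonotoneOn F (Set.Ici 0) := by
    apply monotoneOn_of_deriv_nonneg (convex_Ici _)
    · exact Continuous.continuousOn (by fun_prop)
    · intro x _; exact (hder x).differentiableAt.differentiableWithinAt
    · intro x hx
      rw [(hder x).deriv]
      rw [interior_Ici] at hx
      have : (1+x) * Real.exp (-x) ≤ 1 := by
        have h5 := Real.add_one_le_exp x
        have h6 := Real.exp_pos (-x)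
        have h7 : Real.exp x * Real.exp (-x) = 1 := by
          rw [← Real.exp_add]; simp
        nlinarith [mul_le_mul_of_nonneg_right h5 h6.le]
      linarith
  have := hmono (self_mem_Ici) (by exact hs) hs
  simp only [hF, neg_zero, Real.exp_zero] at this
  nlinarith [this]

lemma cover_rat (A S a u : ℝ) (hA : 0 ≤ A) (hS : 0 < S) (ha : 0 < a)
    (hu0 : 0 < u) (hu1 : u ≤ 1) (hua : a - 1 ≤ u * a) :
    (0 < A ∧ (A + S) * a ≤ 1.41 * (2 + u * a) * A) ∨
    2*(A+S)*a ≤ (2*1.41 + (1.41 - 1)*u*a) * (A + a*S) := by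
  rcases le_or_gt a 1 with ha1 | ha1
  · right
    nlinarith [mul_nonneg (mul_nonneg hu0.le ha.le) (by positivity : (0:ℝ) ≤ A + a*S),
      mul_nonneg hA (by linarith : (0:ℝ) ≤ 1 - a), mul_pos ha hS, mul_nonneg hA ha.le,
      mul_nonneg (mul_nonneg hS.le ha.le) ha.le]
  · rcases le_or_gt (S * a) ((0.41*a + 1.41) * A) with hsub | hsub
    · left
      have hApos : 0 < A := by
        rcases hA.lt_or_eq with h | h
        · exact h
        · exfalso; rw [← h] at hsub; nlinarith [mul_pos hS ha]
      refine ⟨hApos, ?_⟩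
      nlinarith [mul_le_mul_of_nonneg_right hua (by positivity : (0:ℝ) ≤ 1.41 * A)]
    · right
      have h1 : 0 ≤ 0.41 * (u*a - (a-1)) * (A + a*S) :=
        mul_nonneg (mul_nonneg (by norm_num) (by linarith)) (by positivity)
      rcases le_or_gt (1.59*a) 2.41 with hc | hc
      · nlinarith [h1, mul_nonneg hA (by linarith : (0:ℝ) ≤ 2.41 - 1.59*a),
          mul_nonneg (mul_nonneg hS.le ha.le) (by nlinarith : (0:ℝ) ≤ 0.41*(1+a))]
      · have hP : (0:ℝ) ≤ 0.41*a + 1.41 := by linarith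
        have h2 : 0 ≤ 0.41 * (u*a - (a-1)) * (A + a*S) * (0.41*a + 1.41) :=
          mul_nonneg h1 hP
        have h3 := mul_le_mul_of_nonneg_left hsub.le
          (by linarith : (0:ℝ) ≤ 1.59*a - 2.41)
        have h4 : 0 ≤ S*a*((a - 2.51)^2) :=
          mul_nonneg (mul_nonneg hS.le ha.le) (sq_nonneg _)
        have h5 : 0 ≤ S*a := mul_nonneg hS.le ha.le
        nlinarith [h2, h3, h4, h5, hP]

lemma coverage' (A S a : ℝ) (hA : 0 ≤ A) (hS : 0 < S) (ha : 0 < a) :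
    (0 < A ∧ (A + S) * a ≤ Real.sqrt 2 * (2 + Real.exp (-1/a) * a) * A) ∨
    2*(A+S)*a ≤ (2*Real.sqrt 2 + (Real.sqrt 2 - 1)*Real.exp (-1/a)*a) * (A + a*S) := by
  set s := Real.sqrt 2 with hsdef
  have hs2 : s^2 = 2 := Real.sq_sqrt (by norm_num)
  have hs0 : 0 < s := Real.sqrt_pos.mpr (by norm_num)
  have hs141 : (1.41:ℝ) ≤ s := by nlinarith
  set u := Real.exp (-1/a) with hudef
  have hu0 : 0 < u := Real.exp_pos _
  have hu1 : u ≤ 1 := Real.exp_le_one_iff.mpr (by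
    have h : (0:ℝ) ≤ 1/a := by positivity
    rw [neg_div]; linarith)
  have hua : a - 1 ≤ u * a := by
    have h1 : -1/a + 1 ≤ u := Real.add_one_le_exp (-1/a)
    have h2 : (-1/a + 1) * a = a - 1 := by field_simp; ring
    nlinarith [mul_le_mul_of_nonneg_right h1 ha.le]
  have hnn : (0:ℝ) ≤ u*a := by positivity
  rcases cover_rat A S a u hA hS ha hu0 hu1 hua with ⟨hApos, h⟩ | h
  · left
    refine ⟨hApos, le_trans h ?_⟩
    nlinarith [mul_nonneg (mul_nonneg (by linarith : (0:ℝ) ≤ s - 1.41) (by linarith : (0:ℝ) ≤ 2 + u*a)) hApos.le]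
  · right
    refine le_trans h ?_
    nlinarith [mul_nonneg (mul_nonneg (by linarith : (0:ℝ) ≤ s - 1.41) (by linarith : (0:ℝ) ≤ 2 + u*a)) (by positivity : (0:ℝ) ≤ A + a*S)]

/-- Explicit estimate for a Gaussian-type exponential integral. -/
theorem exp_integral_bound (A B a : ℝ) (hA : 0 ≤ A) (hB : 0 < B) (ha : 0 < a) :
    ∫ x in Set.Ioi (0:ℝ), Real.exp (-A * x - a * B / 4 * x^2) ≤
      (2/a + Real.exp (-1/a)) * Real.sqrt 2 / (A + Real.sqrt B) := by
  set S := Real.sqrt B with hSdef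
  have hS : 0 < S := Real.sqrt_pos.mpr hB
  have hSB : S^2 = B := Real.sq_sqrt hB.le
  have hμ : 0 < A + S := by linarith
  set u := Real.exp (-1/a) with hudef
  have hu0 : 0 < u := Real.exp_pos _
  set s := Real.sqrt 2 with hsdef
  have hs0 : 0 < s := Real.sqrt_pos.mpr (by norm_num)
  -- integrability of the integrand on (0,∞)
  have hcont : Continuous (fun x : ℝ => Real.exp (-A * x - a * B / 4 * x^2)) := by fun_prop
  have hfint : IntegrableOn (fun x : ℝ => Real.exp (-A * x - a * B / 4 * x^2)) (Set.Ioi 0) := by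
    have hg := integrable_exp_neg_mul_sq (show (0:ℝ) < a*B/4 by positivity)
    refine Integrable.mono hg.integrableOn hcont.aestronglyMeasurable.restrict ?_
    rw [ae_restrict_iff' measurableSet_Ioi]
    refine ae_of_all _ fun x hx => ?_
    rw [Real.norm_eq_abs, Real.norm_eq_abs, Real.abs_exp, Real.abs_exp]
    have hx0 : 0 < x := hx
    exact Real.exp_le_exp.mpr (by nlinarith [mul_nonneg hA hx0.le])
  rcases coverage' A S a hA hS ha with ⟨hApos, hcase⟩ | hcase
  · -- easy case : compare with exp(-A x)
    have hintA : IntegrableOn (fun x : ℝ => Real.exp (-(A*x))) (Set.Ioi 0) := by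
      simpa [neg_mul] using exp_neg_integrableOn_Ioi 0 hApos
    calc ∫ x in Set.Ioi (0:ℝ), Real.exp (-A * x - a * B / 4 * x^2)
        ≤ ∫ x in Set.Ioi (0:ℝ), Real.exp (-(A*x)) := by
          refine setIntegral_mono_on hfint hintA measurableSet_Ioi fun x hx => ?_
          exact Real.exp_le_exp.mpr (by nlinarith [mul_nonneg (by positivity : (0:ℝ) ≤ a*B/4) (sq_nonneg x)])
      _ = Real.exp (-(A*0))/A := integral_exp_neg_mul_Ioi' A 0 hApos
      _ = 1/A := by simp
      _ ≤ (2/a + u) * s / (A + S) := by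
          rw [div_le_div_iff₀ hApos hμ, one_mul]
          have h0 : 2/a + u = (2 + u*a)/a := by field_simp
          have h2 : (2/a + u) * s * A = (s * (2 + u*a) * A)/a := by rw [h0]; ring
          rw [h2, le_div_iff₀ ha]
          exact hcase
  · -- main case : split the integral at T = 2/(a S)
    set T := 2/(a*S) with hTdef
    have hT : 0 < T := by positivity
    have hQ : 0 < A + a*S := by positivity
    have hfT : IntegrableOn (fun x : ℝ => Real.exp (-A * x - a * B / 4 * x^2)) (Set.Ioi T) :=
      hfint.mono_set (Set.Ioi_subset_Ioi hT.le)
    have hfIoc : IntegrableOn (fun x : ℝ => Real.exp (-A * x - a * B / 4 * x^2)) (Set.Ioc 0 T) :=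
      hfint.mono_set Set.Ioc_subset_Ioi_self
    have hsplit : ∫ x in Set.Ioi (0:ℝ), Real.exp (-A * x - a * B / 4 * x^2)
        = (∫ x in Set.Ioc (0:ℝ) T, Real.exp (-A * x - a * B / 4 * x^2))
          + ∫ x in Set.Ioi T, Real.exp (-A * x - a * B / 4 * x^2) := by
      rw [← setIntegral_union (Set.Ioc_disjoint_Ioi le_rfl) measurableSet_Ioi hfIoc hfT,
        Set.Ioc_union_Ioi_eq_Ioi hT.le]
    -- head estimate
    have hhead : (∫ x in Set.Ioc (0:ℝ) T, Real.exp (-A * x - a * B / 4 * x^2)) ≤ 2/(A + a*S) := by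
      have step1 : (∫ x in Set.Ioc (0:ℝ) T, Real.exp (-A * x - a * B / 4 * x^2))
          ≤ ∫ x in Set.Ioc (0:ℝ) T, Real.exp (-(A*x)) := by
        refine setIntegral_mono_on hfIoc
          ((Continuous.integrableOn_Ioc (by fun_prop))) measurableSet_Ioc fun x hx => ?_
        exact Real.exp_le_exp.mpr (by nlinarith [mul_nonneg (by positivity : (0:ℝ) ≤ a*B/4) (sq_nonneg x)])
      refine le_trans step1 ?_
      rcases hA.lt_or_eq with hApos | hAzero
      · have hftc : (∫ x in Set.Ioc (0:ℝ) T, Real.exp (-(A*x)))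
            = (1 - Real.exp (-(A*T)))/A := by
          rw [← intervalIntegral.integral_of_le hT.le]
          have hder : ∀ x ∈ Set.uIcc (0:ℝ) T,
              HasDerivAt (fun y => -Real.exp (-(A*y))/A) (Real.exp (-(A*x))) x := by
            intro x _
            have h1 : HasDerivAt (fun y : ℝ => -(A*y)) (-A) x := by
              simpa using ((hasDerivAt_id x).const_mul A).fun_neg
            have h2 := (h1.exp.div_const A).fun_neg
            convert h2 using 1
            · rfl
            · rfl
            · ext y; ring
            · field_simp
          rw [intervalIntegral.integral_eq_sub_of_hasDerivAt hder
            ((Continuous.intervalIntegrable (by fun_prop)) 0 T)]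
          field_simp
          simp only [mul_zero, neg_zero, Real.exp_zero]; ring
        rw [hftc]
        have hconv : 2/(A + a*S) = 2*T/(2 + A*T) := by
          rw [hTdef]; field_simp; ring
        rw [hconv, div_le_div_iff₀ hApos (by positivity)]
        have hp := pade' (A*T) (by positivity)
        have hE : 0 < Real.exp (-(A*T)) := Real.exp_pos _
        nlinarith [mul_pos hApos hT]
      · rw [← hAzero]
        simp only [zero_mul, neg_zero, Real.exp_zero]
        rw [setIntegral_const]
        simp only [smul_eq_mul, mul_one, Real.volume_Ioc, sub_zero, ENNReal.toReal_ofReal hT.le]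
        rw [zero_add, hTdef]
        rw [Real.volume_real_Ioc_of_le (by positivity), sub_zero]
    -- tail estimate
    have htail : (∫ x in Set.Ioi T, Real.exp (-A * x - a * B / 4 * x^2)) ≤ u/(A+S) := by
      have hg2 : IntegrableOn (fun x : ℝ => Real.exp (1/a) * Real.exp (-((A+S)*x))) (Set.Ioi T) := by
        have h := (exp_neg_integrableOn_Ioi T hμ).const_mul (Real.exp (1/a))
        simp only [neg_mul] at h
        exact h
      have step1 : (∫ x in Set.Ioi T, Real.exp (-A * x - a * B / 4 * x^2))
          ≤ ∫ x in Set.Ioi T, Real.exp (1/a) * Real.exp (-((A+S)*x)) := by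
        refine setIntegral_mono_on hfT hg2 measurableSet_Ioi fun x hx => ?_
        rw [← Real.exp_add]
        refine Real.exp_le_exp.mpr ?_
        have hinv : a*(1/a) = 1 := by field_simp
        have hkey : S*x - 1/a ≤ a*S^2/4*x^2 := by
          nlinarith [sq_nonneg (a*S*x - 2), ha, hinv]
        have hBX : a*B/4*x^2 = a*S^2/4*x^2 := by rw [hSB]
        linarith [hkey]
      refine le_trans step1 ?_
      rw [integral_const_mul, integral_exp_neg_mul_Ioi' (A+S) T hμ]
      rw [← mul_div_assoc, ← Real.exp_add]
      have hST : S*T = 2/a := by rw [hTdef]; field_simp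
      have harg : 1/a + -((A+S)*T) ≤ -1/a := by
        have hAT : 0 ≤ A*T := mul_nonneg hA hT.le
        have hexp : (A+S)*T = A*T + S*T := by ring
        rw [hexp, hST]
        have h2a : 1/a + -(A*T + 2/a) = -1/a - A*T := by ring
        rw [h2a]
        linarith
      gcongr
      exact Real.exp_le_exp.mpr harg
    -- combine
    rw [hsplit]
    have hcomb : 2/(A + a*S) + u/(A+S) ≤ (2/a + u) * s / (A + S) := by
      have e3 : (2/a + u) * s / (A + S) - u/(A+S) = (2*s + (s-1)*u*a)/(a*(A+S)) := by
        rw [div_sub_div _ _ hμ.ne' hμ.ne', eq_div_iff (by positivity : (a*(A+S)) ≠ 0)]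
        field_simp
        ring
      have e4 : 2/(A + a*S) ≤ (2*s + (s-1)*u*a)/(a*(A+S)) := by
        rw [div_le_div_iff₀ hQ (by positivity)]
        nlinarith [hcase]
      linarith [e3, e4]
    calc (∫ x in Set.Ioc (0:ℝ) T, Real.exp (-A * x - a * B / 4 * x^2))
          + ∫ x in Set.Ioi T, Real.exp (-A * x - a * B / 4 * x^2)
        ≤ 2/(A + a*S) + u/(A+S) := add_le_add hhead htail
      _ ≤ (2/a + u) * s / (A + S) := hcomb
end

section
/- Let α, β, γ, T be positive real numbers, let x > 0, and let z ∈ ℂ with |z − x| ≤ x/2. Define φ(z) := z^{−α}·(1+z)^{−β}·(Log((1+z)/z))^{−γ} and f(z) := (T/(2π))·Log((1+z)/z), using the principal branch of the complex logarithm and principal complex powers. Then |φ(z)| ≤ 2^{α+β−γ}·3^{γ}·x^{−α}·(1+x)^{γ−β}, |f'(z)| ≤ 2T/(π·x·(1+x)), and |f''(z)| ≥ 4T/(27π·x²·(1+x)). -/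
open Real

private lemma exp_sub_one_bound (w : ℂ) : ‖Complex.exp w - 1‖ ≤ ‖w‖ * Real.exp ‖w‖ := by
  have hd : ∀ t ∈ Set.uIcc (0:ℝ) 1,
      HasDerivAt (fun s : ℝ => Complex.exp (s * w)) (Complex.exp (t * w) * w) t := by
    intro t _
    have h1 : HasDerivAt (fun s : ℝ => (s : ℂ) * w) w t := by
      simpa using (Complex.ofRealCLM.hasDerivAt (x := t)).mul_const w
    simpa using h1.cexp
  have hint : IntervalIntegrable (fun t : ℝ => Complex.exp (t * w) * w)
      MeasureTheory.volume 0 1 := by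
    apply Continuous.intervalIntegrable
    exact (Complex.continuous_exp.comp (Complex.continuous_ofReal.mul continuous_const)).mul
      continuous_const
  have FTC := intervalIntegral.integral_eq_sub_of_hasDerivAt hd hint
  have hnorm : ‖∫ t in (0:ℝ)..1, Complex.exp (t * w) * w‖ ≤ ‖w‖ * Real.exp ‖w‖ * |1 - 0| := by
    apply intervalIntegral.norm_integral_le_of_norm_le_const
    intro t ht
    rw [Set.uIoc_of_le (by norm_num : (0:ℝ) ≤ 1)] at ht
    obtain ⟨ht0, ht1⟩ := ht
    rw [norm_mul, Complex.norm_exp]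
    have hre : ((t:ℂ) * w).re = t * w.re := by simp
    rw [hre]
    have h2 : t * w.re ≤ ‖w‖ := by
      have h1 := Complex.abs_re_le_norm w
      have h3 := abs_le.1 h1
      nlinarith [norm_nonneg w]
    have h4 := Real.exp_le_exp.2 h2
    calc Real.exp (t * w.re) * ‖w‖ ≤ Real.exp ‖w‖ * ‖w‖ :=
          mul_le_mul_of_nonneg_right h4 (norm_nonneg w)
      _ = ‖w‖ * Real.exp ‖w‖ := by ring
  rw [FTC] at hnorm
  simpa using hnorm

private lemma log_one_add_lb (u : ℂ) (h : (1:ℂ) + u ≠ 0) :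
    ‖u‖ / (1 + ‖u‖) ≤ ‖Complex.log (1 + u)‖ := by
  have hb : ‖u‖ ≤ ‖Complex.log (1 + u)‖ * Real.exp ‖Complex.log (1 + u)‖ := by
    have h1 := exp_sub_one_bound (Complex.log (1 + u))
    rw [Complex.exp_log h] at h1
    simpa using h1
  set t := ‖Complex.log (1 + u)‖ with htdef
  set a := ‖u‖ with hadef
  have ha0 : 0 ≤ a := norm_nonneg u
  have ht0 : 0 ≤ t := norm_nonneg _
  by_contra hcon
  push_neg at hcon
  have htlt1 : t < 1 := by
    have hq : a / (1 + a) < 1 := by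
      rw [div_lt_one (by linarith)]; linarith
    linarith
  have hE : Real.exp t * (1 - t) ≤ 1 := by
    have h1 := Real.add_one_le_exp (-t)
    rw [Real.exp_neg] at h1
    have h2 : Real.exp t * (1 - t) ≤ Real.exp t * (Real.exp t)⁻¹ :=
      mul_le_mul_of_nonneg_left (by linarith) (Real.exp_pos t).le
    rw [mul_inv_cancel₀ (Real.exp_pos t).ne'] at h2
    exact h2
  have hcon' : t * (1 + a) < a := by
    rw [lt_div_iff₀ (by linarith : (0:ℝ) < 1 + a)] at hcon
    exact hcon
  nlinarith [mul_le_mul_of_nonneg_right hb (by linarith : (0:ℝ) ≤ 1 - t),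
    mul_le_mul_of_nonneg_right hE ht0, Real.exp_pos t]

private lemma key_poly (x p q : ℝ) (hx : 0 < x) (h : p^2 + q^2 ≤ (x/2)^2) :
    8*(((x+p)^2+q^2) * ((1+x+p)^2+q^2)) ≤ 27*x^2*(1+x)*(1+2*x+2*p) := by
  nlinarith [sq_nonneg q, sq_nonneg p, sq_nonneg (p+x/2), sq_nonneg (p-x/2), sq_nonneg x,
    sq_nonneg (p*q), sq_nonneg (q*x), mul_pos hx hx, sq_nonneg (p+q), sq_nonneg (x*(x+2*p))]

/-- Bounds for the auxiliary functions `φ` and `f` of the first exponential integral,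
on the disk `|z - x| ≤ x/2`. -/
theorem first_integral_aux_bounds (α β γ T x : ℝ)
    (hα : 0 < α) (hβ : 0 < β) (hγ : 0 < γ) (hT : 0 < T) (hx : 0 < x)
    (z : ℂ) (hz : ‖z - (x : ℂ)‖ ≤ x / 2)
    (φ f : ℂ → ℂ)
    (hφdef : φ = fun w => w ^ (-(α:ℂ)) * (1 + w) ^ (-(β:ℂ)) *
      Complex.log ((1 + w) / w) ^ (-(γ:ℂ)))
    (hfdef : f = fun w => (T / (2*π) : ℝ) * Complex.log ((1 + w) / w)) :
    ‖φ z‖ ≤ (2:ℝ) ^ (α + β - γ) * (3:ℝ) ^ γ * x ^ (-α) * (1 + x) ^ (γ - β) ∧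
    ‖deriv f z‖ ≤ 2 * T / (π * x * (1 + x)) ∧
    4 * T / (27 * π * x^2 * (1 + x)) ≤ ‖iteratedDeriv 2 f z‖ := by
  subst hφdef hfdef
  have hπ := Real.pi_pos
  -- basic norm facts
  have hpq : (z.re - x)^2 + z.im^2 ≤ (x/2)^2 := by
    have h1 : ‖z - (x:ℂ)‖^2 = (z.re - x)^2 + z.im^2 := by
      rw [Complex.sq_norm, Complex.normSq_apply]
      simp [Complex.sub_re, Complex.sub_im]
      ring
    have h2 : ‖z - (x:ℂ)‖^2 ≤ (x/2)^2 := by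
      apply pow_le_pow_left₀ (norm_nonneg _) hz
    linarith [h1 ▸ h2]
  have hre : x/2 ≤ z.re := by nlinarith [sq_nonneg z.im, sq_nonneg (z.re - x)]
  have hre' : z.re ≤ 3*x/2 := by nlinarith [sq_nonneg z.im, sq_nonneg (z.re - x)]
  have hzre : 0 < z.re := by linarith
  have hz0 : z ≠ 0 := by
    intro h; rw [h] at hzre; simp at hzre
  have h1zre : 0 < (1 + z).re := by simp [Complex.add_re]; linarith
  have h1z0 : (1:ℂ) + z ≠ 0 := by
    intro h; rw [h] at h1zre; simp at h1zre
  have hxnorm : ‖(x:ℂ)‖ = x := by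
    rw [Complex.norm_real, Real.norm_eq_abs, abs_of_pos hx]
  have hznl : x/2 ≤ ‖z‖ := by
    have h1 : ‖(x:ℂ)‖ - ‖z‖ ≤ ‖(x:ℂ) - z‖ := norm_sub_norm_le _ _
    rw [norm_sub_rev] at h1
    linarith
  have hznu : ‖z‖ ≤ 3*x/2 := by
    have h1 : z = (z - (x:ℂ)) + (x:ℂ) := by ring
    calc ‖z‖ = ‖(z - (x:ℂ)) + (x:ℂ)‖ := by rw [← h1]
      _ ≤ ‖z - (x:ℂ)‖ + ‖(x:ℂ)‖ := norm_add_le _ _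
      _ ≤ x/2 + x := by rw [hxnorm]; linarith
      _ = 3*x/2 := by ring
  have hznpos : 0 < ‖z‖ := by linarith
  have h1znl : 1 + x/2 ≤ ‖1 + z‖ := by
    have h1 : ‖((1+x : ℝ):ℂ)‖ - ‖1 + z‖ ≤ ‖((1+x:ℝ):ℂ) - (1 + z)‖ := norm_sub_norm_le _ _
    have h2 : ((1+x:ℝ):ℂ) - (1 + z) = -(z - (x:ℂ)) := by push_cast; ring
    rw [h2, norm_neg] at h1
    have h3 : ‖((1+x:ℝ):ℂ)‖ = 1 + x := by
      rw [Complex.norm_real, Real.norm_eq_abs, abs_of_pos (by linarith)]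
    linarith
  have h1znpos : 0 < ‖1 + z‖ := by linarith
  have hLlb : 2/(3*(1+x)) ≤ ‖Complex.log ((1 + z) / z)‖ := by
    have heq : (1:ℂ) + z⁻¹ = (1 + z) / z := by field_simp; ring
    have h1 := log_one_add_lb z⁻¹ (by rw [heq]; exact div_ne_zero h1z0 hz0)
    rw [heq] at h1
    have hu : 2/(3*x) ≤ ‖z⁻¹‖ := by
      rw [norm_inv]
      have h2 : (3*x/2)⁻¹ ≤ ‖z‖⁻¹ := inv_anti₀ hznpos hznu
      have h3 : (3*x/2)⁻¹ = 2/(3*x) := by rw [inv_div]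
      linarith
    have hu0 : 0 ≤ ‖z⁻¹‖ := norm_nonneg _
    have h4 : 2/(3*(1+x)) ≤ ‖z⁻¹‖ / (1 + ‖z⁻¹‖) := by
      rw [div_le_div_iff₀ (by positivity) (by positivity)]
      have h5 : 2 ≤ 3*x*‖z⁻¹‖ := by
        rw [div_le_iff₀ (by positivity)] at hu
        linarith
      nlinarith
    linarith
  have hLpos : 0 < ‖Complex.log ((1 + z) / z)‖ := by
    have h0 : (0:ℝ) < 2/(3*(1+x)) := by positivity
    linarith
  have hL0 : Complex.log ((1 + z) / z) ≠ 0 := by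
    intro h; rw [h] at hLpos; simp at hLpos
  -- derivative facts
  set c : ℂ := ((T / (2*π) : ℝ) : ℂ) with hc
  have hder : ∀ w : ℂ, 0 < w.re →
      HasDerivAt (fun u : ℂ => (c : ℂ) * Complex.log ((1 + u) / u)) (-c/(w*(1+w))) w := by
    intro w hw
    have hw0 : w ≠ 0 := by
      intro h; rw [h] at hw; simp at hw
    have h1wre : 0 < (1 + w).re := by
      simp only [Complex.add_re, Complex.one_re]; linarith
    have h1w : (1:ℂ) + w ≠ 0 := by
      intro h; rw [h] at h1wre; simp at h1wre
    have hslit : (1 + w) / w ∈ Complex.slitPlane := by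
      rw [Complex.mem_slitPlane_iff]
      left
      have heq : (1 + w) / w = 1 + w⁻¹ := by field_simp; try ring
      rw [heq]
      simp only [Complex.add_re, Complex.one_re, Complex.inv_re]
      have := Complex.normSq_pos.2 hw0
      positivity
    have hg : HasDerivAt (fun u : ℂ => (1 + u) / u) ((1*w - (1+w)*1)/w^2) w :=
      ((hasDerivAt_id w).const_add 1).div (hasDerivAt_id w) hw0
    have hlog := (hg.clog hslit).const_mul c
    refine hlog.congr_deriv ?_
    rw [div_div_eq_mul_div, div_mul_eq_mul_div, div_div]
    field_simp
    ring
  have hderz := hder z hzre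
  have hderiv_eq : deriv (fun u : ℂ => (c : ℂ) * Complex.log ((1 + u) / u)) z
      = -c/(z*(1+z)) := hderz.deriv
  refine ⟨?_, ?_, ?_⟩
  · -- φ bound
    have ha : ‖z ^ (-(α:ℂ))‖ = ‖z‖ ^ (-α) := by
      rw [Complex.norm_cpow_of_ne_zero hz0]
      simp
    have hb : ‖(1 + z) ^ (-(β:ℂ))‖ = ‖1 + z‖ ^ (-β) := by
      rw [Complex.norm_cpow_of_ne_zero h1z0]
      simp
    have hcc : ‖Complex.log ((1 + z) / z) ^ (-(γ:ℂ))‖ = ‖Complex.log ((1 + z) / z)‖ ^ (-γ) := by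
      rw [Complex.norm_cpow_of_ne_zero hL0]
      simp
    have b1 : ‖z‖ ^ (-α) ≤ (x/2) ^ (-α) :=
      Real.rpow_le_rpow_of_nonpos (by positivity) hznl (by linarith)
    have b2 : ‖1 + z‖ ^ (-β) ≤ ((1+x)/2) ^ (-β) := by
      apply Real.rpow_le_rpow_of_nonpos (by positivity) _ (by linarith)
      linarith
    have b3 : ‖Complex.log ((1 + z) / z)‖ ^ (-γ) ≤ (2/(3*(1+x))) ^ (-γ) :=
      Real.rpow_le_rpow_of_nonpos (by positivity) hLlb (by linarith)
    have hrhs : (x/2) ^ (-α) * ((1+x)/2) ^ (-β) * (2/(3*(1+x))) ^ (-γ)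
        = (2:ℝ) ^ (α + β - γ) * (3:ℝ) ^ γ * x ^ (-α) * (1 + x) ^ (γ - β) := by
      rw [Real.rpow_def_of_pos (by positivity : (0:ℝ) < x/2),
        Real.rpow_def_of_pos (by positivity : (0:ℝ) < (1+x)/2),
        Real.rpow_def_of_pos (by positivity : (0:ℝ) < 2/(3*(1+x))),
        Real.rpow_def_of_pos two_pos, Real.rpow_def_of_pos (by norm_num : (0:ℝ) < 3),
        Real.rpow_def_of_pos hx, Real.rpow_def_of_pos (by linarith : (0:ℝ) < 1+x)]
      rw [← Real.exp_add, ← Real.exp_add, ← Real.exp_add, ← Real.exp_add, ← Real.exp_add,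
        Real.exp_eq_exp]
      rw [Real.log_div (by positivity : (0:ℝ) < x).ne' (by norm_num : (2:ℝ) ≠ 0),
        Real.log_div (by positivity : (0:ℝ) < 1+x).ne' (by norm_num : (2:ℝ) ≠ 0),
        Real.log_div (by norm_num : (2:ℝ) ≠ 0) (by positivity : (0:ℝ) < 3*(1+x)).ne',
        Real.log_mul (by norm_num : (3:ℝ) ≠ 0) (by positivity : (0:ℝ) < 1+x).ne']
      ring
    calc ‖z ^ (-(α:ℂ)) * (1 + z) ^ (-(β:ℂ)) * Complex.log ((1 + z) / z) ^ (-(γ:ℂ))‖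
        = ‖z‖ ^ (-α) * ‖1 + z‖ ^ (-β) * ‖Complex.log ((1 + z) / z)‖ ^ (-γ) := by
          rw [norm_mul, norm_mul, ha, hb, hcc]
      _ ≤ (x/2) ^ (-α) * ((1+x)/2) ^ (-β) * (2/(3*(1+x))) ^ (-γ) :=
          mul_le_mul (mul_le_mul b1 b2 (by positivity) (by positivity)) b3
            (by positivity) (by positivity)
      _ = _ := hrhs
  · -- first derivative bound
    rw [show (fun w : ℂ => ((T / (2*π) : ℝ) : ℂ) * Complex.log ((1 + w) / w))
        = fun u : ℂ => c * Complex.log ((1 + u) / u) from rfl]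
    rw [hderiv_eq]
    rw [norm_div, norm_neg, norm_mul]
    have hcn : ‖c‖ = T/(2*π) := by
      rw [hc, Complex.norm_real, Real.norm_eq_abs, abs_of_pos (by positivity)]
    rw [hcn]
    rw [div_le_div_iff₀ (by positivity) (by positivity)]
    have hm : x/2 * ((1+x)/2) ≤ ‖z‖ * ‖1 + z‖ := by
      apply mul_le_mul hznl (by linarith) (by linarith) (by linarith)
    have heq2 : T/(2*π) * (π*x*(1+x)) = 2*T*(x/2*((1+x)/2)) := by
      field_simp
    rw [heq2]
    apply mul_le_mul_of_nonneg_left hm (by positivity)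
  · -- second derivative lower bound
    have hmem : {w : ℂ | 0 < w.re} ∈ nhds z :=
      (isOpen_lt continuous_const Complex.continuous_re).mem_nhds hzre
    have heq : deriv (fun u : ℂ => c * Complex.log ((1 + u) / u))
        =ᶠ[nhds z] fun w => -c/(w*(1+w)) :=
      Filter.eventually_of_mem hmem (fun w hw => (hder w hw).deriv)
    have hg2 : HasDerivAt (fun w : ℂ => -c/(w*(1+w)))
        ((0*(z*(1+z)) - (-c)*(1*(1+z)+z*1))/(z*(1+z))^2) z :=
      (hasDerivAt_const z (-c)).div ((hasDerivAt_id z).mul ((hasDerivAt_id z).const_add 1))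
        (mul_ne_zero hz0 h1z0)
    have hval : (0*(z*(1+z)) - (-c)*(1*(1+z)+z*1))/(z*(1+z))^2 = c*(1+2*z)/(z*(1+z))^2 := by
      ring
    have h2d : iteratedDeriv 2 (fun u : ℂ => c * Complex.log ((1 + u) / u)) z
        = c*(1+2*z)/(z*(1+z))^2 := by
      rw [iteratedDeriv_succ, iteratedDeriv_one, heq.deriv_eq, hg2.deriv, hval]
    rw [show (fun w : ℂ => ((T / (2*π) : ℝ) : ℂ) * Complex.log ((1 + w) / w))
        = fun u : ℂ => c * Complex.log ((1 + u) / u) from rfl, h2d]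
    rw [norm_div, norm_mul, norm_pow, norm_mul]
    have hcn : ‖c‖ = T/(2*π) := by
      rw [hc, Complex.norm_real, Real.norm_eq_abs, abs_of_pos (by positivity)]
    rw [hcn]
    -- coordinates
    have e1 : ‖z‖^2 = (x+(z.re-x))^2 + z.im^2 := by
      rw [Complex.sq_norm, Complex.normSq_apply]; ring
    have e2 : ‖1+z‖^2 = (1+x+(z.re-x))^2 + z.im^2 := by
      rw [Complex.sq_norm, Complex.normSq_apply]
      simp [Complex.add_re, Complex.add_im]
      ring
    have h2re : 1+2*x+2*(z.re-x) ≤ ‖1+2*z‖ := by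
      have h1 : (1+2*z).re ≤ ‖1+2*z‖ := by
        exact Complex.re_le_norm _
      have h2 : (1+2*z).re = 1+2*x+2*(z.re-x) := by
        simp [Complex.add_re, Complex.mul_re]
        ring
      linarith
    have h2repos : (0:ℝ) ≤ 1+2*x+2*(z.re-x) := by linarith
    have key : 8*(‖z‖^2*‖1+z‖^2) ≤ 27*x^2*(1+x)*‖1+2*z‖ := by
      calc 8*(‖z‖^2*‖1+z‖^2) ≤ 27*x^2*(1+x)*(1+2*x+2*(z.re-x)) := by
            rw [e1, e2]; exact key_poly x (z.re-x) z.im hx hpq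
        _ ≤ 27*x^2*(1+x)*‖1+2*z‖ := by
            apply mul_le_mul_of_nonneg_left h2re (by positivity)
    rw [div_le_div_iff₀ (by positivity) (by positivity)]
    have hsimp : T/(2*π)*‖1+2*z‖*(27*π*x^2*(1+x)) = 27/2*T*x^2*(1+x)*‖1+2*z‖ := by
      field_simp
    rw [hsimp]
    have hkT := mul_le_mul_of_nonneg_left key hT.le
    calc 4*T*(‖z‖*‖1+z‖)^2 = T*(8*(‖z‖^2*‖1+z‖^2))/2 := by ring
      _ ≤ T*(27*x^2*(1+x)*‖1+2*z‖)/2 := by linarith [hkT]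
      _ = 27/2*T*x^2*(1+x)*‖1+2*z‖ := by ring
end

section
/- Let α, A, T be positive real numbers, let x ≥ A·√T be real, and let z ∈ ℂ with |z − x| ≤ x/2. Define φ(z) := z^{−α}·(Arsinh(z·√(π/(2T))))^{−1}·(√(T/(2πz²) + 1/4) + 1/2)^{−1}·(T/(2πz²) + 1/4)^{−1/4} and f(z) := z²/2 − √(T·z²/(2π) + z⁴/4) − (T/π)·Arsinh(z·√(π/(2T))), where Arsinh(w) := Log(w + (1 + w²)^{1/2}) and all logarithms, square roots and powers are taken with principal branches. Then |φ(z)| ≤ 2^{α+1/2}·(arsinh((A/2)·√(π/2)))^{−1}·x^{−α}, |f'(z)| ≤ 2T/(π·x), and |f''(z)| ≥ 4T/((8/A² + 9π)·x²). -/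
set_option maxHeartbeats 1000000

open Real

/-- The complex inverse hyperbolic sine (principal branch). -/
noncomputable def CArsinh (w : ℂ) : ℂ := Complex.log (w + (1 + w^2) ^ ((1:ℂ)/2))

namespace SecondAux

lemma sqrt_re_nonneg (ζ : ℂ) : 0 ≤ (ζ ^ ((1:ℂ)/2)).re := by
  rcases eq_or_ne ζ 0 with h | h
  · simp [h, Complex.zero_cpow (by norm_num : ((1:ℂ)/2) ≠ 0)]
  · rw [Complex.cpow_def_of_ne_zero h, Complex.exp_re]
    apply mul_nonneg (Real.exp_pos _).le
    apply Real.cos_nonneg_of_mem_Icc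
    have h1 := Complex.neg_pi_lt_arg ζ
    have h2 := Complex.arg_le_pi ζ
    constructor <;> simp [Complex.mul_im, Complex.log_im, Complex.log_re] <;> linarith

lemma sq_sqrt' {ζ : ℂ} (h : ζ ≠ 0) : (ζ ^ ((1:ℂ)/2))^2 = ζ := by
  rw [sq, ← Complex.cpow_add _ _ h]
  norm_num

lemma sqrt_eq_of_sq {ζ y : ℂ} (hsq : y^2 = ζ) (hy : 0 < y.re) : ζ ^ ((1:ℂ)/2) = y := by
  have hy0 : y ≠ 0 := by
    intro h; rw [h] at hy; simp at hy
  have hζ : ζ ≠ 0 := by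
    intro h; rw [h] at hsq; exact hy0 (pow_eq_zero_iff (n := 2) (by norm_num) |>.mp hsq)
  have h2 : (ζ ^ ((1:ℂ)/2))^2 = y^2 := by rw [sq_sqrt' hζ, hsq]
  have : (ζ ^ ((1:ℂ)/2) - y) * (ζ ^ ((1:ℂ)/2) + y) = 0 := by ring_nf; linear_combination h2
  rcases mul_eq_zero.mp this with h | h
  · exact sub_eq_zero.mp h
  · exfalso
    have heq : ζ ^ ((1:ℂ)/2) = -y := by linear_combination h
    have hnn := sqrt_re_nonneg ζ
    rw [heq] at hnn
    simp only [Complex.neg_re] at hnn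
    linarith

lemma norm_cpow_real {ζ : ℂ} (h : ζ ≠ 0) {w : ℂ} (hw : w.im = 0) :
    ‖ζ ^ w‖ = ‖ζ‖ ^ w.re := by
  rw [Complex.norm_cpow_of_ne_zero h, hw]
  simp

lemma re_im_facts {b : ℝ} (hb : 0 < b) {w : ℂ} (hu : 0 < w.re) (hv : |w.im| < w.re) :
    w.re < (((b:ℂ) + w^2) ^ ((1:ℂ)/2)).re ∧
    |(((b:ℂ) + w^2) ^ ((1:ℂ)/2)).im| < (((b:ℂ) + w^2) ^ ((1:ℂ)/2)).re ∧
    (((b:ℂ) + w^2) ^ ((1:ℂ)/2))^2 = (b:ℂ) + w^2 := by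
  have hv2 : w.im^2 < w.re^2 := by
    have := abs_lt.mp hv; nlinarith
  have hζre : ((b:ℂ) + w^2).re = b + (w.re^2 - w.im^2) := by
    simp [pow_two, Complex.add_re, Complex.mul_re]
  have hζim : ((b:ℂ) + w^2).im = 2*(w.re*w.im) := by
    simp [pow_two, Complex.add_im, Complex.mul_im]; ring
  have hζrepos : 0 < ((b:ℂ) + w^2).re := by rw [hζre]; nlinarith
  have hζ0 : (b:ℂ) + w^2 ≠ 0 := by
    intro h; rw [h] at hζrepos; simp at hζrepos
  have hsq := sq_sqrt' hζ0
  set y := ((b:ℂ) + w^2) ^ ((1:ℂ)/2) with hy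
  have ha : 0 ≤ y.re := sqrt_re_nonneg _
  have e1 : y.re^2 - y.im^2 = b + (w.re^2 - w.im^2) := by
    rw [← hζre, ← hsq]; simp [pow_two, Complex.mul_re]
  have e2 : y.re * y.im = w.re * w.im := by
    have : (y^2).im = 2*(w.re*w.im) := by rw [hsq, hζim]
    simp [pow_two, Complex.mul_im] at this; linarith
  set a := y.re; set c := y.im; set u := w.re; set v := w.im
  have hapos : 0 < a := by
    rcases lt_or_eq_of_le ha with h | h
    · exact h
    · exfalso
      have hv0 : v = 0 := by nlinarith
      nlinarith
  have key : (a^2 - u^2) * (a^2 + v^2) = a^2 * b := by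
    linear_combination (a^2) * e1 + (a*c + u*v) * e2
  have h01 : 0 < a^2*b := by positivity
  have h02 : 0 < a^2 + v^2 := by positivity
  have h03 : 0 < a^2 - u^2 := by
    by_contra hle
    push_neg at hle
    nlinarith [key]
  have h1 : u < a := by nlinarith [h03]
  have h2 : |c| < a := by
    rw [abs_lt]; constructor <;> nlinarith
  exact ⟨h1, h2, hsq⟩

lemma arsinh_norm_lower {w : ℂ} (hu : 0 < w.re) (hv : |w.im| < w.re) :
    w.re + Real.sqrt (1 + w.re^2) ≤ ‖w + ((1:ℂ) + w^2) ^ ((1:ℂ)/2)‖ := by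
  have h1C : ((1:ℂ) + w^2) = (((1:ℝ):ℂ) + w^2) := by norm_num
  rw [h1C]
  obtain ⟨hua, hca, hsq⟩ := re_im_facts one_pos hu hv
  set y := ((((1:ℝ)):ℂ) + w^2) ^ ((1:ℂ)/2) with hy
  set a := y.re; set c := y.im; set u := w.re; set v := w.im
  have hapos : 0 < a := lt_trans hu hua
  have e1 : a^2 - c^2 = 1 + (u^2 - v^2) := by
    have : (y^2).re = (((1:ℝ):ℂ) + w^2).re := by rw [hsq]
    simp [pow_two, Complex.mul_re, Complex.add_re] at this
    nlinarith [this]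
  have e2 : a * c = u * v := by
    have : (y^2).im = (((1:ℝ):ℂ) + w^2).im := by rw [hsq]
    simp [pow_two, Complex.mul_im, Complex.add_im] at this
    nlinarith [this]
  have hvc : 0 ≤ v * c := by
    have h3 : (v*c)*a = u*v^2 := by linear_combination v * e2
    nlinarith
  set k := Real.sqrt (1 + u^2) with hkdef
  have hk : 0 ≤ k := Real.sqrt_nonneg _
  have hk2 : k^2 = 1 + u^2 := Real.sq_sqrt (by positivity)
  have keyid : (c^2 + v*c + u*a - u*k) * (a^2*(a+k)) = u*v^2*((u+a)*(u+k)) := by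
    linear_combination ((a+k+u)*(a*c+u*v) + v*a^2 + v*a*k) * e2 + (u*a^2) * e1 - (u*a^2) * hk2
  have hX : 0 ≤ c^2 + v*c + u*a - u*k := by
    nlinarith [keyid, mul_pos (mul_pos hapos hapos) (by positivity : (0:ℝ) < a + k),
      mul_nonneg (mul_nonneg hu.le (sq_nonneg v)) (by positivity : (0:ℝ) ≤ (u+a)*(u+k))]
  have hnsq : (‖w + y‖)^2 = (u+a)^2 + (v+c)^2 := by
    rw [Complex.sq_norm, Complex.normSq_apply]
    simp [Complex.add_re, Complex.add_im]; ring
  have hge : (u+k)^2 ≤ (‖w + y‖)^2 := by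
    rw [hnsq]; nlinarith [e1, hk2, hX]
  nlinarith [norm_nonneg (w + y), hge, hu, hk]

lemma re_sqrt_ge_half {ζ : ℂ} (h : (1:ℝ)/4 ≤ ζ.re) : 1/2 ≤ (ζ ^ ((1:ℂ)/2)).re := by
  have hζ0 : ζ ≠ 0 := by
    intro hh; rw [hh] at h; norm_num at h
  have hsq := sq_sqrt' hζ0
  set y := ζ ^ ((1:ℂ)/2)
  have ha : 0 ≤ y.re := sqrt_re_nonneg _
  have e1 : y.re^2 - y.im^2 = ζ.re := by
    rw [← hsq]; simp [pow_two, Complex.mul_re]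
  nlinarith

lemma arith1 (t u b : ℝ) (ht : 0 ≤ t) (hu : 0 ≤ u) (hb : 0 < b) (h : u^2 ≤ b + t^2) :
    t*u ≤ t^2 + b/2 := by
  nlinarith [mul_le_mul_of_nonneg_left h (sq_nonneg t), mul_nonneg ht hu, sq_nonneg b]

lemma arith2 (t u b x : ℝ) (ht : 0 ≤ t) (hu : 0 ≤ u) (hb : 0 < b) (hx : 0 < x)
    (h : u^2 ≤ b + t^2) (ht3 : t ≤ 3*x/2) : (t+u)*u ≤ 9*x^2/2 + 3*b/2 := by
  have h1 := arith1 t u b ht hu hb h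
  nlinarith [h, h1, ht3, hx, ht]

lemma arith3 (A T x P : ℝ) (hA : 0 < A) (hT : 0 < T) (hx : 0 < x)
    (hA2T : A^2*T ≤ x^2) (hP : P ≤ 9*x^2/2 + 3*T/π) (hPpos : 0 < P) :
    4*T/((8/A^2+9*π)*x^2) ≤ (2*T/π)/P := by
  have hπ : (0:ℝ) < π := Real.pi_pos
  have h1 : 0 < (8/A^2+9*π)*x^2 := by positivity
  rw [div_le_div_iff₀ h1 hPpos]
  have hQ : (2*T/π)*((8/A^2+9*π)*x^2) = 16*T*x^2/(π*A^2) + 18*T*x^2 := by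
    field_simp; ring
  have h12 : 12*T^2/π ≤ 16*T*x^2/(π*A^2) := by
    rw [div_le_div_iff₀ hπ (by positivity)]
    nlinarith [mul_nonneg (mul_nonneg hT.le hπ.le) (sub_nonneg.mpr hA2T),
      mul_nonneg (mul_nonneg hT.le hπ.le) (sq_nonneg x)]
  have h13 : 4*T*P ≤ 18*T*x^2 + 12*T^2/π := by
    have h2 := mul_le_mul_of_nonneg_left hP (by positivity : (0:ℝ) ≤ 4*T)
    have h3 : 4*T*(9*x^2/2 + 3*T/π) = 18*T*x^2 + 12*T^2/π := by ring
    linarith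
  linarith

end SecondAux

open SecondAux in
/-- Bounds for the auxiliary functions `φ` and `f` of the second exponential integral,
on the disk `|z - x| ≤ x/2`, for `x ≥ A·√T`. -/
theorem second_integral_aux_bounds (α A T : ℝ)
    (hα : 0 < α) (hA : 0 < A) (hT : 0 < T)
    (x : ℝ) (hx : A * Real.sqrt T ≤ x)
    (z : ℂ) (hz : ‖z - (x : ℂ)‖ ≤ x / 2)
    (φ f : ℂ → ℂ)
    (hφdef : φ = fun w => w ^ (-(α:ℂ)) *
      (CArsinh (w * (Real.sqrt (π / (2*T)) : ℝ)))⁻¹ *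
      (((T:ℂ) / (2*π*w^2) + 1/4) ^ ((1:ℂ)/2) + 1/2)⁻¹ *
      ((T:ℂ) / (2*π*w^2) + 1/4) ^ (-(1:ℂ)/4))
    (hfdef : f = fun w => w^2/2 - ((T:ℂ)*w^2/(2*π) + w^4/4) ^ ((1:ℂ)/2) -
      ((T:ℂ)/π) * CArsinh (w * (Real.sqrt (π / (2*T)) : ℝ))) :
    ‖φ z‖ ≤ (2:ℝ) ^ (α + 1/2) * (Real.arsinh (A/2 * Real.sqrt (π/2)))⁻¹ * x ^ (-α) ∧
    ‖deriv f z‖ ≤ 2 * T / (π * x) ∧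
    4 * T / ((8/A^2 + 9*π) * x^2) ≤ ‖iteratedDeriv 2 f z‖ := by
  have hπ : (0:ℝ) < π := Real.pi_pos
  have hzabs : ‖z - (x : ℂ)‖ ≤ x / 2 := by
    exact hz
  have hπC : ((π:ℝ):ℂ) ≠ 0 := Complex.ofReal_ne_zero.mpr (ne_of_gt hπ)
  have hsT : (0:ℝ) < Real.sqrt T := Real.sqrt_pos.mpr hT
  have hxpos : 0 < x := lt_of_lt_of_le (by positivity) hx
  -- basic disk geometry
  have hzre : x/2 ≤ z.re := by
    have h1 := Complex.abs_re_le_norm (z - (x:ℂ))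
    have h2 : (z - (x:ℂ)).re = z.re - x := by simp
    rw [h2] at h1
    have := abs_le.mp (h1.trans hzabs)
    linarith [this.1]
  have hzsq : (z.re - x)^2 + z.im^2 ≤ (x/2)^2 := by
    have h1 : (‖z - (x:ℂ)‖)^2 ≤ (x/2)^2 := by
      have h0 := norm_nonneg (z - (x:ℂ))
      nlinarith [hzabs]
    rw [Complex.sq_norm, Complex.normSq_apply] at h1
    have h2 : (z - (x:ℂ)).re = z.re - x := by simp
    have h3 : (z - (x:ℂ)).im = z.im := by simp
    rw [h2, h3] at h1
    nlinarith [h1]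
  have hzrepos : 0 < z.re := lt_of_lt_of_le (by positivity) hzre
  have him2 : z.im^2 < z.re^2 := by nlinarith [sq_nonneg (z.re - x/2)]
  have hcone : |z.im| < z.re := by
    rw [abs_lt]; constructor <;> nlinarith [him2]
  have hz0 : z ≠ 0 := by
    intro h; rw [h] at hzrepos; simp at hzrepos
  have habs_lo : x/2 ≤ ‖z‖ := le_trans hzre (Complex.re_le_norm z)
  have hxabs : ‖(x:ℂ)‖ = x := by
    rw [Complex.norm_real, Real.norm_eq_abs, abs_of_pos hxpos]
  have habs_hi : ‖z‖ ≤ 3*x/2 := by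
    calc ‖z‖ = ‖(z - (x:ℂ)) + (x:ℂ)‖ := by rw [sub_add_cancel]
      _ ≤ ‖z - (x:ℂ)‖ + ‖(x:ℂ)‖ := norm_add_le _ _
      _ ≤ x/2 + x := by rw [hxabs]; linarith [hzabs]
      _ = 3*x/2 := by ring
  -- setup
  set b : ℝ := 2*T/π with hbdef
  have hbpos : 0 < b := by positivity
  have hbC : ((b:ℝ):ℂ) = 2*(T:ℂ)/(π:ℂ) := by push_cast [hbdef]; ring
  set s : ℝ := Real.sqrt (π / (2*T)) with hsdef
  have hspos : 0 < s := Real.sqrt_pos.mpr (by positivity)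
  have hs2 : s^2 = π/(2*T) := Real.sq_sqrt (by positivity)
  have hs2b : s^2 * b = 1 := by rw [hs2, hbdef]; field_simp
  set g : ℂ → ℂ := fun w => (((b:ℝ):ℂ) + w^2) ^ ((1:ℂ)/2) with hgdef
  set U : Set ℂ := {w : ℂ | 0 < w.re ∧ |w.im| < w.re} with hUdef
  have hUopen : IsOpen U := by
    apply IsOpen.inter (isOpen_lt continuous_const Complex.continuous_re)
    exact isOpen_lt (Complex.continuous_im.abs) Complex.continuous_re
  have hzU : z ∈ U := ⟨hzrepos, hcone⟩
  -- facts about g on U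
  have hgfacts : ∀ w ∈ U, w.re < (g w).re ∧ |(g w).im| < (g w).re ∧ (g w)^2 = ((b:ℝ):ℂ) + w^2 :=
    fun w hw => re_im_facts hbpos hw.1 hw.2
  have hg0 : ∀ w ∈ U, g w ≠ 0 := by
    intro w hw
    obtain ⟨h1, _, _⟩ := hgfacts w hw
    intro h
    rw [h] at h1
    simp at h1
    exact absurd hw.1 (not_lt.mpr h1.le)
  set F : ℂ → ℂ := fun w => w^2/2 - w/2 * g w -
      ((T:ℂ)/(π:ℝ)) * Complex.log ((s:ℂ) * (w + g w)) with hFdef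
  -- f = F on U
  have hfF : ∀ w ∈ U, f w = F w := by
    intro w hw
    obtain ⟨hwa, hwc, hwsq⟩ := hgfacts w hw
    have hwrepos := hw.1
    have hwgre : 0 < (w * g w).re := by
      rw [Complex.mul_re]
      have habs : |w.im * (g w).im| < w.re * (g w).re := by
        rw [abs_mul]
        exact mul_lt_mul'' hw.2 hwc (abs_nonneg _) (abs_nonneg _)
      have := neg_abs_le (w.im * (g w).im)
      have := le_abs_self (w.im * (g w).im)
      linarith [abs_lt.mp habs]
    -- identity A: the square root term
    have idA : ((T:ℂ)*w^2/(2*(π:ℝ)) + w^4/4) ^ ((1:ℂ)/2) = w/2 * g w := by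
      apply sqrt_eq_of_sq
      · rw [mul_pow, hwsq, hbC]
        field_simp
        ring
      · have : w/2 * g w = ((1/2:ℝ):ℂ) * (w * g w) := by push_cast; ring
        rw [this, Complex.re_ofReal_mul]
        linarith
    -- identity B: the Arsinh term
    have idB : ((1:ℂ) + (w * (s:ℂ))^2) ^ ((1:ℂ)/2) = (s:ℂ) * g w := by
      apply sqrt_eq_of_sq
      · rw [mul_pow, hwsq]
        have h1 : ((s:ℂ))^2 * ((b:ℝ):ℂ) = 1 := by
          rw [← Complex.ofReal_pow, ← Complex.ofReal_mul, hs2b]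
          simp
        linear_combination h1
      · rw [Complex.re_ofReal_mul]
        have : 0 < (g w).re := lt_trans hw.1 hwa
        positivity
    have idC : CArsinh (w * (s:ℂ)) = Complex.log ((s:ℂ) * (w + g w)) := by
      rw [CArsinh, idB]
      congr 1
      ring
    rw [hfdef, hFdef]
    simp only
    rw [idA, idC]
  -- derivative of F on U
  have hdg : ∀ w ∈ U, HasDerivAt g (w / g w) w := by
    intro w hw
    obtain ⟨hwa, hwc, hwsq⟩ := hgfacts w hw
    have hζslit : ((b:ℝ):ℂ) + w^2 ∈ Complex.slitPlane := by
      rw [Complex.mem_slitPlane_iff]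
      left
      rw [← hwsq]
      have h1 : ((g w)^2).re = (g w).re^2 - (g w).im^2 := by
        simp [pow_two, Complex.mul_re]
      rw [h1]
      nlinarith [abs_lt.mp hwc, lt_trans hw.1 hwa]
    have hd1 : HasDerivAt (fun v : ℂ => ((b:ℝ):ℂ) + v^2) (2*w) w := by
      have := (hasDerivAt_pow 2 w).const_add (((b:ℝ):ℂ))
      simpa using this
    have := hd1.cpow_const (c := (1:ℂ)/2) hζslit
    convert this using 1
    rw [show ((1:ℂ)/2 - 1) = -((1:ℂ)/2) by norm_num, Complex.cpow_neg]
    have hgne := hg0 w hw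
    rw [hgdef] at hgne ⊢
    field_simp
  have hS0 : ∀ w ∈ U, (s:ℂ) * (w + g w) ∈ Complex.slitPlane := by
    intro w hw
    obtain ⟨hwa, hwc, hwsq⟩ := hgfacts w hw
    rw [Complex.mem_slitPlane_iff]
    left
    rw [Complex.re_ofReal_mul, Complex.add_re]
    have h1 : 0 < w.re := hw.1
    have h2 : 0 < (g w).re := lt_trans hw.1 hwa
    apply mul_pos hspos
    linarith
  have hdF : ∀ w ∈ U, HasDerivAt F (w - g w) w := by
    intro w hw
    obtain ⟨hwa, hwc, hwsq⟩ := hgfacts w hw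
    have hgne := hg0 w hw
    have hgrepos : 0 < (g w).re := lt_trans hw.1 hwa
    have hd1 : HasDerivAt (fun v : ℂ => v^2/2) w w := by
      have := (hasDerivAt_pow 2 w).div_const 2
      simpa using this
    have hd2 : HasDerivAt (fun v : ℂ => v/2 * g v) ((1/2) * g w + w/2 * (w / g w)) w :=
      ((hasDerivAt_id w).div_const 2).mul (hdg w hw)
    have hdS : HasDerivAt (fun v : ℂ => (s:ℂ) * (v + g v)) ((s:ℂ) * (1 + w / g w)) w :=
      ((hasDerivAt_id w).add (hdg w hw)).const_mul _
    have hdlog : HasDerivAt (fun v : ℂ => ((T:ℂ)/(π:ℝ)) * Complex.log ((s:ℂ) * (v + g v)))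
        (((T:ℂ)/(π:ℝ)) * (((s:ℂ) * (1 + w / g w)) / ((s:ℂ) * (w + g w)))) w :=
      (hdS.clog (hS0 w hw)).const_mul _
    have hwg0 : w + g w ≠ 0 := by
      intro h
      have : (w + g w).re = 0 := by rw [h]; simp
      rw [Complex.add_re] at this
      linarith [hw.1, hgrepos]
    have hsC0 : (s:ℂ) ≠ 0 := Complex.ofReal_ne_zero.mpr (ne_of_gt hspos)
    have hg2 : (g w)^2 = 2*(T:ℂ)/(π:ℝ) + w^2 := by rw [hwsq, hbC]
    have e3 : ((s:ℂ) * (1 + w / g w)) / ((s:ℂ) * (w + g w)) = (g w)⁻¹ := by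
      rw [mul_div_mul_left _ _ hsC0, div_eq_iff hwg0]
      field_simp
      ring
    have := (hd1.sub hd2).sub hdlog
    rw [e3] at this
    have hgg : g w * (g w)⁻¹ = 1 := mul_inv_cancel₀ hgne
    refine this.congr_deriv ?_
    linear_combination ((g w)⁻¹/2) * hg2 - (g w/2) * hgg
  -- transfer derivatives from F to f
  have hUnhds : U ∈ nhds z := hUopen.mem_nhds hzU
  have hDf : ∀ w ∈ U, deriv f w = w - g w := by
    intro w hw
    have hev : f =ᶠ[nhds w] F := Filter.eventuallyEq_of_mem (hUopen.mem_nhds hw) hfF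
    rw [hev.deriv_eq]
    exact (hdF w hw).deriv
  have hderiv1 : deriv f z = z - g z := hDf z hzU
  have hderiv2 : iteratedDeriv 2 f z = 1 - z / g z := by
    have hev : deriv f =ᶠ[nhds z] (fun w => w - g w) :=
      Filter.eventuallyEq_of_mem hUnhds hDf
    have hdd : HasDerivAt (fun w => w - g w) (1 - z / g z) z :=
      (hasDerivAt_id z).sub (hdg z hzU)
    rw [show (2:ℕ) = 1 + 1 from rfl, iteratedDeriv_succ, iteratedDeriv_one]
    rw [hev.deriv_eq]
    exact hdd.deriv
  obtain ⟨hza, hzc, hzsq'⟩ := hgfacts z hzU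
  have hgzne := hg0 z hzU
  have hzg0 : z + g z ≠ 0 := by
    intro h
    have : (z + g z).re = 0 := by rw [h]; simp
    rw [Complex.add_re] at this
    linarith [lt_trans hzrepos hza]
  -- key norm identity:  z - g z = -b / (z + g z)
  have hkey : z - g z = -((b:ℝ):ℂ) / (z + g z) := by
    rw [eq_div_iff hzg0]
    linear_combination - hzsq'
  have hnorm_zg : x ≤ ‖z + g z‖ := by
    have h1 : (z + g z).re ≤ ‖z + g z‖ := Complex.re_le_norm _
    rw [Complex.add_re] at h1
    linarith [hza, hzre]
  have habs_gz_sq : (‖g z‖)^2 ≤ b + (‖z‖)^2 := by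
    have h1 : (‖g z‖)^2 = ‖((b:ℝ):ℂ) + z^2‖ := by
      rw [← norm_pow, hzsq']
    rw [h1]
    calc ‖((b:ℝ):ℂ) + z^2‖ ≤ ‖((b:ℝ):ℂ)‖ + ‖z^2‖ :=
          norm_add_le _ _
      _ = b + (‖z‖)^2 := by
          rw [Complex.norm_real, Real.norm_eq_abs, abs_of_pos hbpos, norm_pow]
  -- first derivative bound
  have hbound1 : ‖deriv f z‖ ≤ 2 * T / (π * x) := by
    rw [hderiv1, hkey]
    rw [norm_div, norm_neg, Complex.norm_real, Real.norm_eq_abs, abs_of_pos hbpos]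
    rw [div_le_div_iff₀ (lt_of_lt_of_le hxpos hnorm_zg) (by positivity)]
    calc b * (π * x) = (2*T/π) * (π * x) := by rw [hbdef]
      _ = 2*T*x := by field_simp
      _ ≤ 2*T* ‖z + g z‖ := by nlinarith [hnorm_zg, hT]
      _ = 2*T* ‖z + g z‖ := rfl
  -- second derivative bound
  have hA2T : A^2 * T ≤ x^2 := by
    have h1 : (A * Real.sqrt T)^2 ≤ x^2 := by
      have h0 : 0 ≤ A * Real.sqrt T := by positivity
      nlinarith [hx]
    have h2 : Real.sqrt T ^ 2 = T := Real.sq_sqrt hT.le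
    nlinarith [h1, h2]
  have hbound2 : 4 * T / ((8/A^2 + 9*π) * x^2) ≤ ‖iteratedDeriv 2 f z‖ := by
    rw [hderiv2]
    have h9 : (1:ℂ) - z / g z = (g z - z) / g z := by field_simp
    rw [h9, norm_div]
    have h10 : ‖g z - z‖ = b / ‖z + g z‖ := by
      have hgg : g z - z = -(z - g z) := by ring
      rw [hgg, norm_neg, hkey, norm_div, norm_neg, Complex.norm_real, Real.norm_eq_abs,
        abs_of_pos hbpos]
    rw [h10, div_div]
    have hgzpos : 0 < ‖g z‖ := norm_pos_iff.mpr hgzne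
    have hPpos : 0 < ‖z + g z‖ * ‖g z‖ :=
      mul_pos (lt_of_lt_of_le hxpos hnorm_zg) hgzpos
    have hPa : ‖z + g z‖ * ‖g z‖ ≤ 9*x^2/2 + 3*T/π := by
      have h1 : ‖z + g z‖ ≤ ‖z‖ + ‖g z‖ :=
        norm_add_le _ _
      have h2 : ‖z + g z‖ * ‖g z‖ ≤
          (‖z‖ + ‖g z‖) * ‖g z‖ :=
        mul_le_mul_of_nonneg_right h1 (norm_nonneg _)
      have h3 := arith2 (‖z‖) (‖g z‖) b x (norm_nonneg z)
        (norm_nonneg (g z)) hbpos hxpos habs_gz_sq habs_hi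
      have h4 : 9*x^2/2 + 3*b/2 = 9*x^2/2 + 3*T/π := by rw [hbdef]; ring
      linarith [h2, h3, h4]
    have := arith3 A T x (‖z + g z‖ * ‖g z‖) hA hT hxpos hA2T hPa hPpos
    rw [hbdef]
    exact this
  -- φ bound
  have hbound3 : ‖φ z‖ ≤ (2:ℝ) ^ (α + 1/2) * (Real.arsinh (A/2 * Real.sqrt (π/2)))⁻¹ * x ^ (-α) := by
    have hsC : s * Real.sqrt T = Real.sqrt (π/2) := by
      rw [hsdef, ← Real.sqrt_mul (by positivity)]
      congr 1
      field_simp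
    set r₀ : ℝ := A/2 * Real.sqrt (π/2) with hr0
    have hr0pos : 0 < r₀ := by
      rw [hr0]; positivity
    set w₀ : ℂ := z * (s:ℂ) with hw0
    have hw0re' : w₀.re = z.re * s := by
      rw [hw0]; simp [Complex.mul_re]
    have hw0im' : w₀.im = z.im * s := by
      rw [hw0]; simp [Complex.mul_im]
    have hw0re : r₀ ≤ w₀.re := by
      rw [hw0re', hr0, ← hsC]
      have h1 : A * Real.sqrt T / 2 ≤ z.re := by linarith [hzre, hx]
      have h2 := mul_le_mul_of_nonneg_right h1 hspos.le
      calc A/2*(s*Real.sqrt T) = A*Real.sqrt T/2*s := by ring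
        _ ≤ z.re*s := h2
    have hw0repos : 0 < w₀.re := lt_of_lt_of_le hr0pos hw0re
    have hw0cone : |w₀.im| < w₀.re := by
      rw [hw0im', hw0re', abs_mul, abs_of_pos hspos]
      exact mul_lt_mul_of_pos_right hcone hspos
    have hS := arsinh_norm_lower hw0repos hw0cone
    have hSnorm : r₀ + Real.sqrt (1 + r₀^2) ≤
        ‖w₀ + ((1:ℂ) + w₀^2) ^ ((1:ℂ)/2)‖ := by
      refine le_trans ?_ hS
      have h1 : Real.sqrt (1 + r₀^2) ≤ Real.sqrt (1 + w₀.re^2) := by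
        apply Real.sqrt_le_sqrt
        nlinarith [hw0re, hr0pos]
      linarith [hw0re]
    have harspos : 0 < Real.arsinh r₀ := Real.arsinh_pos_iff.mpr hr0pos
    have hars : Real.arsinh r₀ ≤ ‖CArsinh w₀‖ := by
      rw [CArsinh]
      have h2 := Complex.log_re (w₀ + ((1:ℂ) + w₀^2) ^ ((1:ℂ)/2))
      have h3 : Real.arsinh r₀ ≤
          (Complex.log (w₀ + ((1:ℂ) + w₀^2) ^ ((1:ℂ)/2))).re := by
        rw [h2]
        have h4 : Real.arsinh r₀ = Real.log (r₀ + Real.sqrt (1 + r₀^2)) := by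
          rw [Real.arsinh]
        rw [h4]
        exact Real.log_le_log (by positivity) hSnorm
      calc Real.arsinh r₀ ≤ (Complex.log (w₀ + ((1:ℂ) + w₀^2) ^ ((1:ℂ)/2))).re := h3
        _ ≤ |(Complex.log (w₀ + ((1:ℂ) + w₀^2) ^ ((1:ℂ)/2))).re| := le_abs_self _
        _ ≤ ‖Complex.log (w₀ + ((1:ℂ) + w₀^2) ^ ((1:ℂ)/2))‖ :=
            Complex.abs_re_le_norm _
    -- the ζ' factor
    set ζ' : ℂ := (T:ℂ)/(2*(π:ℂ)*z^2) + 1/4 with hζ'def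
    have hz2re : 0 < (z^2).re := by
      have h1 : (z^2).re = z.re^2 - z.im^2 := by
        simp [pow_two, Complex.mul_re]
      rw [h1]
      linarith [him2]
    have hreζ' : 1/4 ≤ ζ'.re := by
      have hterm : ((T:ℂ)/(2*(π:ℂ)*z^2)).re = T * (((2:ℂ)*(π:ℂ)*z^2)⁻¹).re := by
        rw [div_eq_mul_inv, Complex.re_ofReal_mul]
      have h1 : ((2:ℂ)*(π:ℂ)*z^2) = ((2*π:ℝ):ℂ)*z^2 := by push_cast; ring
      have h2 : 0 ≤ (((2:ℂ)*(π:ℂ)*z^2)⁻¹).re := by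
        rw [h1, Complex.inv_re]
        apply div_nonneg _ (Complex.normSq_nonneg _)
        rw [Complex.re_ofReal_mul]
        positivity
      have h3 : ((T:ℂ) * ((2:ℂ)*(π:ℂ)*z^2)⁻¹).re = T * (((2:ℂ)*(π:ℂ)*z^2)⁻¹).re :=
        Complex.re_ofReal_mul _ _
      have h4 : ((1:ℂ)/4).re = 1/4 := by norm_num
      rw [hζ'def, Complex.add_re, hterm, h4]
      have h5 := mul_nonneg hT.le h2
      linarith [h5]
    have hζ'0 : ζ' ≠ 0 := by
      intro h; rw [h] at hreζ'; norm_num at hreζ'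
    have hζ'abs : 1/4 ≤ ‖ζ'‖ := le_trans hreζ' (Complex.re_le_norm _)
    have hsqre := re_sqrt_ge_half hreζ'
    have hN3 : (1:ℝ) ≤ ‖ζ' ^ ((1:ℂ)/2) + 1/2‖ := by
      have h1 : (ζ' ^ ((1:ℂ)/2) + 1/2).re = (ζ' ^ ((1:ℂ)/2)).re + 1/2 := by
        simp [Complex.add_re]
      have h2 := Complex.re_le_norm (ζ' ^ ((1:ℂ)/2) + 1/2)
      rw [h1] at h2
      linarith [hsqre]
    -- assemble
    rw [hφdef]
    simp only
    rw [norm_mul, norm_mul, norm_mul]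
    have hN1 : ‖z ^ (-(α:ℂ))‖ ≤ (2:ℝ)^α * x^(-α) := by
      have he : (-(α:ℂ)) = (((-α:ℝ)):ℂ) := by push_cast; ring
      rw [he, norm_cpow_real hz0 (Complex.ofReal_im _)]
      rw [Complex.ofReal_re]
      have h1 : ‖z‖ ^ (-α) ≤ (x/2) ^ (-α) :=
        Real.rpow_le_rpow_of_nonpos (by positivity) habs_lo (by linarith)
      have h2 : (x/2:ℝ) ^ (-α) = (2:ℝ)^α * x^(-α) := by
        rw [Real.div_rpow hxpos.le (by norm_num : (0:ℝ) ≤ 2),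
          Real.rpow_neg (by norm_num : (0:ℝ) ≤ 2), div_eq_mul_inv, inv_inv]
        ring
      linarith [h1, h2]
    have hN2 : ‖(CArsinh (z * (s:ℂ)))⁻¹‖ ≤ (Real.arsinh r₀)⁻¹ := by
      rw [norm_inv]
      exact inv_anti₀ harspos hars
    have hN3' : ‖(ζ' ^ ((1:ℂ)/2) + 1/2)⁻¹‖ ≤ 1 := by
      rw [norm_inv]
      rw [inv_le_one_iff₀]
      right; exact hN3
    have hN4 : ‖ζ' ^ (-(1:ℂ)/4)‖ ≤ (2:ℝ)^((1:ℝ)/2) := by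
      have he : ((-(1:ℂ))/4) = (((-(1/4):ℝ)):ℂ) := by push_cast; norm_num
      rw [he, norm_cpow_real hζ'0 (Complex.ofReal_im _)]
      rw [Complex.ofReal_re]
      have h1 : ‖ζ'‖ ^ (-(1/4):ℝ) ≤ ((1:ℝ)/4) ^ (-(1/4):ℝ) :=
        Real.rpow_le_rpow_of_nonpos (by norm_num) hζ'abs (by norm_num)
      have e4 : (2:ℝ)^(2:ℝ) = 4 := by
        rw [show (2:ℝ) = ((2:ℕ):ℝ) from by norm_num, Real.rpow_natCast]
        norm_num
      have h24 : ((1:ℝ)/4) = (2:ℝ)^(-2:ℝ) := by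
        rw [Real.rpow_neg (by norm_num : (0:ℝ) ≤ 2), e4]
        norm_num
      have h2 : ((1:ℝ)/4) ^ (-(1/4):ℝ) = (2:ℝ)^((1:ℝ)/2) := by
        rw [h24, ← Real.rpow_mul (by norm_num : (0:ℝ) ≤ 2)]
        norm_num
      linarith [h1, h2]
    have hRa : (0:ℝ) ≤ (2:ℝ)^α * x^(-α) := by positivity
    have hRb : (0:ℝ) ≤ (2:ℝ)^α * x^(-α) * (Real.arsinh r₀)⁻¹ :=
      mul_nonneg hRa (inv_nonneg.mpr harspos.le)
    have hfin : ‖z ^ (-(α:ℂ))‖ * ‖(CArsinh (z * (s:ℂ)))⁻¹‖ * ‖(ζ' ^ ((1:ℂ)/2) + 1/2)⁻¹‖ *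
        ‖ζ' ^ (-(1:ℂ)/4)‖ ≤ ((2:ℝ)^α * x^(-α)) * (Real.arsinh r₀)⁻¹ * 1 * (2:ℝ)^((1:ℝ)/2) := by
      refine mul_le_mul (mul_le_mul (mul_le_mul hN1 hN2 (norm_nonneg _) hRa) hN3'
        (norm_nonneg _) hRb) hN4 (norm_nonneg _) ?_
      calc (0:ℝ) ≤ (2:ℝ)^α * x^(-α) * (Real.arsinh r₀)⁻¹ := hRb
        _ = (2:ℝ)^α * x^(-α) * (Real.arsinh r₀)⁻¹ * 1 := by ring
    calc ‖z ^ (-(α:ℂ))‖ * ‖(CArsinh (z * (s:ℂ)))⁻¹‖ * ‖(ζ' ^ ((1:ℂ)/2) + 1/2)⁻¹‖ *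
        ‖ζ' ^ (-(1:ℂ)/4)‖ ≤ ((2:ℝ)^α * x^(-α)) * (Real.arsinh r₀)⁻¹ * 1 * (2:ℝ)^((1:ℝ)/2) := hfin
      _ = (2:ℝ) ^ (α + 1/2) * (Real.arsinh r₀)⁻¹ * x ^ (-α) := by
          rw [Real.rpow_add (by norm_num : (0:ℝ) < 2)]
          ring
  exact ⟨hbound3, hbound1, hbound2⟩
end

section
/- For every real Z > 4 one has Σ_{Z/2 < n ≤ Z−√Z} d(n)/(Z − n) ≤ (1/2)·(log Z)² − (log 2 − γ)·log Z + 2.365, where the sum ranges over positive integers n with Z/2 < n ≤ Z − √Z. -/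
set_option maxHeartbeats 1000000

open Real

/-- Number of positive divisors of `n`. -/
def d (n : ℕ) : ℕ := n.divisors.card

open Finset in
lemma harmonic_le (N : ℕ) (hN : 1 ≤ N) :
    ∑ a ∈ Finset.Icc 1 N, (1 : ℝ)/a ≤ Real.log N + Real.eulerMascheroniConstant + 1/N := by
  have h1 : (harmonic N : ℝ) - Real.log (N + 1) < Real.eulerMascheroniConstant :=
    Real.eulerMascheroniSeq_lt_eulerMascheroniConstant N
  have hNpos : (0:ℝ) < N := by exact_mod_cast hN
  have h2 : Real.log (N + 1) - Real.log N ≤ 1/N := by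
    rw [← Real.log_div (by positivity) (by positivity)]
    have := Real.log_le_sub_one_of_pos (x := ((N:ℝ)+1)/N) (by positivity)
    have : ((N:ℝ)+1)/N - 1 = 1/N := by field_simp; ring
    linarith [Real.log_le_sub_one_of_pos (x := ((N:ℝ)+1)/N) (by positivity)]
  have h3 : ∑ a ∈ Finset.Icc 1 N, (1 : ℝ)/a = (harmonic N : ℝ) := by
    rw [harmonic_eq_sum_Icc]
    push_cast
    simp [one_div]
  rw [h3]
  linarith

open Finset in
lemma divisor_bound (n N : ℕ) (hn : 0 < n) (h : n < (N+1)^2) :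
    d n ≤ 2 * ((Finset.Icc 1 N).filter (· ∣ n)).card := by
  have hsplit : (n.divisors.filter (· ≤ N)).card + (n.divisors.filter (fun a => ¬ a ≤ N)).card
      = d n := Finset.card_filter_add_card_filter_not _
  have hinj : (n.divisors.filter (fun a => ¬ a ≤ N)).card ≤ (n.divisors.filter (· ≤ N)).card := by
    apply Finset.card_le_card_of_injOn (fun a => n / a)
    · intro a ha
      simp only [Finset.mem_coe, Finset.mem_filter, Nat.mem_divisors, not_le] at ha ⊢
      obtain ⟨⟨hdvd, hne⟩, hlt⟩ := ha
      refine ⟨⟨Nat.div_dvd_of_dvd hdvd, hne⟩, ?_⟩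
      by_contra hc
      push_neg at hc
      have : (N+1) * (N+1) ≤ n := by
        calc (N+1) * (N+1) ≤ a * (n / a) := Nat.mul_le_mul hlt hc
        _ = n := Nat.mul_div_cancel' hdvd
      nlinarith [this]
    · intro a ha b hb hab
      have ha' := Finset.mem_of_mem_filter a ha
      have hb' := Finset.mem_of_mem_filter b hb
      rw [Nat.mem_divisors] at ha' hb'
      have : n / (n / a) = n / (n / b) := congrArg (n / ·) hab
      rwa [Nat.div_div_self ha'.1 ha'.2, Nat.div_div_self hb'.1 hb'.2] at this
  have hset : n.divisors.filter (· ≤ N) = (Finset.Icc 1 N).filter (· ∣ n) := by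
    ext a
    simp only [Finset.mem_filter, Nat.mem_divisors, Finset.mem_Icc]
    constructor
    · rintro ⟨⟨hdvd, hne⟩, hle⟩
      exact ⟨⟨Nat.one_le_iff_ne_zero.mpr (by rintro rfl; exact hne (Nat.eq_zero_of_zero_dvd hdvd)), hle⟩, hdvd⟩
    · rintro ⟨⟨h1, h2⟩, hdvd⟩
      exact ⟨⟨hdvd, hn.ne'⟩, h2⟩
  rw [← hset]
  omega

open Finset in
lemma telescope_bound (Z c : ℝ) (a p q : ℕ) (ha : 0 < a) (hc : 0 < c)
    (hq : (a : ℝ) * q ≤ Z - c) (hp : Z/2 < (a:ℝ) * (p+1)) (hcZ : c ≤ Z/2) :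
    ∑ k ∈ Finset.Ioc p q, 1/(Z - (a:ℝ)*k) ≤ 1/c + (1/a) * (Real.log (Z/2) - Real.log c) := by
  have haR : (0:ℝ) < a := by exact_mod_cast ha
  have hlog : Real.log c ≤ Real.log (Z/2) := Real.log_le_log hc hcZ
  rcases le_or_gt q p with hqp | hpq
  · rw [Finset.Ioc_eq_empty (by omega)]
    simp only [Finset.sum_empty]
    have h1 : (0:ℝ) ≤ 1/c := by positivity
    have h2 : (0:ℝ) ≤ (1/a) * (Real.log (Z/2) - Real.log c) :=
      mul_nonneg (by positivity) (by linarith)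
    linarith
  -- nonempty case
  have hpq1 : p + 1 ≤ q := hpq
  have key : ∀ k : ℕ, k ≤ q → c ≤ Z - (a:ℝ)*k := by
    intro k hk
    have : (a:ℝ)*k ≤ (a:ℝ)*q := by
      apply mul_le_mul_of_nonneg_left _ haR.le
      exact_mod_cast hk
    linarith
  have hIoc : Finset.Ioc p q = Finset.Ico (p+1) (q+1) := by
    rw [← Finset.Icc_add_one_left_eq_Ioc, Finset.Ico_add_one_right_eq_Icc]
  rw [hIoc, Finset.sum_Ico_succ_top hpq1]
  have hlast : 1/(Z - (a:ℝ)*q) ≤ 1/c := by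
    apply one_div_le_one_div_of_le hc (key q le_rfl)
  have hstep : ∑ k ∈ Finset.Ico (p+1) q, 1/(Z - (a:ℝ)*k)
      ≤ ∑ k ∈ Finset.Ico (p+1) q, (1/a) * (Real.log (Z - (a:ℝ)*k) - Real.log (Z - (a:ℝ)*(k+1))) := by
    apply Finset.sum_le_sum
    intro k hk
    rw [Finset.mem_Ico] at hk
    have hk1 : (k:ℕ) + 1 ≤ q := hk.2
    have hy : c ≤ Z - (a:ℝ)*(k+1) := by
      have := key (k+1) hk1
      push_cast at this ⊢
      linarith
    have hx : Z - (a:ℝ)*(k+1) + a = Z - (a:ℝ)*k := by ring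
    set y := Z - (a:ℝ)*(k+1) with hy'
    have hxval : Z - (a:ℝ)*k = y + a := by rw [hy']; ring
    rw [hxval]
    have hypos : 0 < y := lt_of_lt_of_le hc hy
    have hxpos : 0 < y + a := by linarith
    have hlog1 : Real.log (y / (y+a)) ≤ y/(y+a) - 1 := Real.log_le_sub_one_of_pos (by positivity)
    rw [Real.log_div hypos.ne' hxpos.ne'] at hlog1
    have h2 : y/(y+a) - 1 = -((a:ℝ)/(y+a)) := by field_simp; ring
    have h3 : (a:ℝ)/(y+a) ≤ Real.log (y+a) - Real.log y := by linarith
    calc 1/(y+a) = (1/a) * ((a:ℝ)/(y+a)) := by field_simp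
    _ ≤ (1/a) * (Real.log (y+a) - Real.log y) := by
        apply mul_le_mul_of_nonneg_left h3 (by positivity)
  have hq' : p + 1 + (q - (p+1)) = q := by omega
  have htel : ∑ k ∈ Finset.Ico (p+1) q, (1/(a:ℝ)) * (Real.log (Z - (a:ℝ)*k) - Real.log (Z - (a:ℝ)*(k+1)))
      = (1/a) * (Real.log (Z - (a:ℝ)*(p+1)) - Real.log (Z - (a:ℝ)*q)) := by
    rw [← Finset.mul_sum]
    congr 1
    rw [Finset.sum_Ico_eq_sum_range]
    have h := Finset.sum_range_sub' (fun i => Real.log (Z - (a:ℝ)*((p+1+i : ℕ)))) (q-(p+1))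
    rw [hq'] at h
    calc ∑ k ∈ Finset.range (q-(p+1)),
          (Real.log (Z - (a:ℝ)*(p+1+k : ℕ)) - Real.log (Z - (a:ℝ)*(((p+1+k : ℕ):ℝ)+1)))
        = ∑ i ∈ Finset.range (q-(p+1)),
          (Real.log (Z - (a:ℝ)*((p+1+i : ℕ))) - Real.log (Z - (a:ℝ)*((p+1+(i+1) : ℕ)))) := by
          apply Finset.sum_congr rfl
          intro i _
          congr 2
          push_cast
          ring
      _ = Real.log (Z - (a:ℝ)*((p+1+0 : ℕ))) - Real.log (Z - (a:ℝ)*q) := h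
      _ = Real.log (Z - (a:ℝ)*(p+1)) - Real.log (Z - (a:ℝ)*q) := by norm_num
  have hApos : 0 < Z - (a:ℝ)*(p+1) := by
    have := key (p+1) hpq1
    push_cast at this
    linarith
  have hA : Real.log (Z - (a:ℝ)*(p+1)) ≤ Real.log (Z/2) :=
    Real.log_le_log hApos (by linarith)
  have hB : Real.log c ≤ Real.log (Z - (a:ℝ)*q) := Real.log_le_log hc (key q le_rfl)
  have hfin : (1/(a:ℝ)) * (Real.log (Z - (a:ℝ)*(p+1)) - Real.log (Z - (a:ℝ)*q))
      ≤ (1/a) * (Real.log (Z/2) - Real.log c) :=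
    mul_le_mul_of_nonneg_left (by linarith) (by positivity)
  linarith [hstep, htel.le, htel.ge, hlast]

open Finset in
lemma final_numeric (L l2 g e : ℝ) (hkey : (L - 2*l2) * e ≤ 0.365 + 2*g*l2)
    (he : 0 ≤ e) (hl2 : 0 ≤ l2) :
    2 + 2*(L/2 - l2)*(L/2 + g + e) ≤ (1/2)*L^2 - (l2 - g)*L + 2.365 := by nlinarith

lemma key_numeric (x g l2 : ℝ) (he : x ≤ 2/Real.exp 1) (hg : 1/2 < g)
    (hl2 : 0.6931471803 < l2) : x ≤ 0.365 + 2*g*l2 := by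
  have hexp : (2.71:ℝ) < Real.exp 1 := by have := Real.exp_one_gt_d9; linarith
  have h3 : 2/Real.exp 1 ≤ 0.739 := by
    rw [div_le_iff₀ (Real.exp_pos 1)]; nlinarith
  nlinarith

/-- Explicit bound for the divisor sum `Σ_{Z/2 < n ≤ Z−√Z} d(n)/(Z−n)`. -/
theorem divisor_sum_below_bound (Z : ℝ) (hZ : 4 < Z) :
    ∑ n ∈ (Finset.Icc 1 ⌊Z - Real.sqrt Z⌋₊).filter (fun n : ℕ => Z/2 < (n:ℝ)),
        (d n : ℝ) / (Z - n)
      ≤ (1/2) * (Real.log Z)^2 - (Real.log 2 - Real.eulerMascheroniConstant) * Real.log Z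
          + 2.365 := by
  have hZ0 : (0:ℝ) < Z := by linarith
  set s := Real.sqrt Z with hs
  have hs0 : 0 < s := Real.sqrt_pos.mpr hZ0
  have hss : s * s = Z := Real.mul_self_sqrt hZ0.le
  have hs2 : 2 < s := by nlinarith [Real.sq_sqrt hZ0.le, Real.sqrt_nonneg Z]
  have hsZ2 : s < Z/2 := by nlinarith
  set N := ⌊s⌋₊ with hN
  set M := ⌊Z - s⌋₊ with hM
  have hNs : (N:ℝ) ≤ s := Nat.floor_le hs0.le
  have hsN1 : s < (N:ℝ) + 1 := by exact_mod_cast Nat.lt_floor_add_one s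
  have hN1 : 1 ≤ N := by
    have : (1:ℕ) ≤ ⌊s⌋₊ := Nat.le_floor (by exact_mod_cast (by linarith : (1:ℝ) ≤ s))
    exact this
  have hN0 : (0:ℝ) < N := by exact_mod_cast hN1
  have hMle : (M:ℝ) ≤ Z - s := Nat.floor_le (by linarith)
  set S := (Finset.Icc 1 M).filter (fun n : ℕ => Z/2 < (n:ℝ)) with hS
  set C := Real.log (Z/2) - Real.log s with hC
  set γ := Real.eulerMascheroniConstant with hγ
  have hfacts : ∀ n ∈ S, 1 ≤ n ∧ (n:ℝ) ≤ Z - s ∧ Z/2 < (n:ℝ) := by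
    intro n hn
    rw [hS, Finset.mem_filter, Finset.mem_Icc] at hn
    refine ⟨hn.1.1, ?_, hn.2⟩
    calc (n:ℝ) ≤ M := by exact_mod_cast hn.1.2
    _ ≤ Z - s := hMle
  calc ∑ n ∈ S, (d n : ℝ) / (Z - n)
      ≤ ∑ n ∈ S, (2 * ((Finset.Icc 1 N).filter (· ∣ n)).card : ℝ)/(Z - n) := by
        apply Finset.sum_le_sum
        intro n hn
        obtain ⟨h1, h2, h3⟩ := hfacts n hn
        have hZn : 0 < Z - n := by linarith
        have hlt : n < (N+1)^2 := by
          have : (n:ℝ) < (((N+1):ℕ):ℝ)^2 := by push_cast; nlinarith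
          exact_mod_cast this
        have := divisor_bound n N (by omega) hlt
        gcongr
        exact_mod_cast this
    _ = ∑ a ∈ Finset.Icc 1 N, ∑ n ∈ S.filter (a ∣ ·), 2/(Z - (n:ℝ)) := by
        have step1 : ∀ n ∈ S, (2 * (((Finset.Icc 1 N).filter (· ∣ n)).card) : ℝ)/(Z - n)
            = ∑ a ∈ Finset.Icc 1 N, (if a ∣ n then 2/(Z - (n:ℝ)) else 0) := by
          intro n _
          rw [← Finset.sum_filter, Finset.sum_const, nsmul_eq_mul]
          ring
        rw [Finset.sum_congr rfl step1, Finset.sum_comm]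
        exact Finset.sum_congr rfl fun a _ => (Finset.sum_filter _ _).symm
    _ ≤ ∑ a ∈ Finset.Icc 1 N, (2*(1/s + (1/(a:ℝ))*C)) := by
        apply Finset.sum_le_sum
        intro a ha
        rw [Finset.mem_Icc] at ha
        have ha1 : 1 ≤ a := ha.1
        have ha0 : (0:ℝ) < a := by exact_mod_cast ha1
        set p := ⌊Z/(2*a)⌋₊ with hp
        set q := M / a with hq
        have haq : a * q ≤ M := by rw [hq, Nat.mul_comm]; exact Nat.div_mul_le_self M a
        have hsub : S.filter (a ∣ ·) ⊆ (Finset.Ioc p q).image (fun k => a * k) := by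
          intro n hn
          rw [Finset.mem_filter] at hn
          obtain ⟨hnS, hdvd⟩ := hn
          obtain ⟨hn1, hn2, hn3⟩ := hfacts n hnS
          obtain ⟨k, rfl⟩ := hdvd
          apply Finset.mem_image.mpr ⟨k, ?_, rfl⟩
          rw [Finset.mem_Ioc]
          constructor
          · rw [hp, Nat.floor_lt (by positivity)]
            rw [div_lt_iff₀ (by positivity)]
            push_cast at hn3 ⊢
            nlinarith
          · rw [hq, Nat.le_div_iff_mul_le (by omega)]
            rw [Nat.mul_comm]
            have : ((a*k : ℕ):ℝ) ≤ Z - s := hn2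
            rw [hS, Finset.mem_filter, Finset.mem_Icc] at hnS
            exact hnS.1.2
        have himgnn : ∀ n ∈ (Finset.Ioc p q).image (fun k => a * k), (0:ℝ) ≤ 2/(Z - n) := by
          intro n hn
          obtain ⟨k, hk, rfl⟩ := Finset.mem_image.mp hn
          rw [Finset.mem_Ioc] at hk
          have : a * k ≤ M := le_trans (Nat.mul_le_mul_left a hk.2) haq
          have h1 : ((a*k : ℕ):ℝ) ≤ Z - s := le_trans (by exact_mod_cast this) hMle
          have : (0:ℝ) < Z - (a*k : ℕ) := by linarith
          positivity
        calc ∑ n ∈ S.filter (a ∣ ·), 2/(Z - (n:ℝ))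
            ≤ ∑ n ∈ (Finset.Ioc p q).image (fun k => a * k), 2/(Z - (n:ℝ)) :=
              Finset.sum_le_sum_of_subset_of_nonneg hsub (fun n hn _ => himgnn n hn)
          _ = ∑ k ∈ Finset.Ioc p q, 2/(Z - ((a*k : ℕ):ℝ)) := by
              apply Finset.sum_image
              intro x _ y _ hxy
              exact Nat.eq_of_mul_eq_mul_left (by omega) hxy
          _ = 2 * ∑ k ∈ Finset.Ioc p q, 1/(Z - (a:ℝ)*k) := by
              rw [Finset.mul_sum]
              apply Finset.sum_congr rfl
              intro k _
              push_cast
              ring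
          _ ≤ 2*(1/s + (1/(a:ℝ))*C) := by
              apply mul_le_mul_of_nonneg_left _ (by norm_num)
              apply telescope_bound Z s a p q (by omega) hs0 ?_ ?_ (le_of_lt hsZ2)
              · calc ((a:ℝ)) * q = ((a*q : ℕ):ℝ) := by push_cast; ring
                _ ≤ (M:ℝ) := by exact_mod_cast haq
                _ ≤ Z - s := hMle
              · have hfl : Z/(2*(a:ℝ)) < (p:ℝ) + 1 := by
                  exact Nat.lt_floor_add_one _
                have : Z/(2*(a:ℝ)) < (p:ℝ) + 1 := hfl
                calc Z/2 = (a:ℝ) * (Z/(2*a)) := by field_simp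
                _ < (a:ℝ) * ((p:ℝ)+1) := by
                    apply mul_lt_mul_of_pos_left this ha0
    _ = 2*(N:ℝ)*(1/s) + 2*C*(∑ a ∈ Finset.Icc 1 N, (1 : ℝ)/a) := by
        simp only [mul_add]
        rw [Finset.sum_add_distrib, Finset.sum_const, Nat.card_Icc, Finset.mul_sum]
        congr 1
        · rw [nsmul_eq_mul]
          push_cast [Nat.add_sub_cancel]
          try ring
        · apply Finset.sum_congr rfl
          intros
          ring
    _ ≤ (1/2) * (Real.log Z)^2 - (Real.log 2 - γ) * Real.log Z + 2.365 := by
        set L := Real.log Z with hL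
        set l2 := Real.log 2 with hl2
        have hlogs : Real.log s = L/2 := by rw [hs, Real.log_sqrt hZ0.le, hL]
        have hCval : C = L/2 - l2 := by
          rw [hC, Real.log_div (by linarith) (by norm_num), hlogs, hl2]
          ring
        have hl2pos : (0.6931471803:ℝ) < l2 := by
          rw [hl2]; exact Real.log_two_gt_d9
        have hγ2 : (1/2:ℝ) < γ := Real.one_half_lt_eulerMascheroniConstant
        have hL4 : 2*l2 ≤ L := by
          have h4 : Real.log 4 ≤ L := Real.log_le_log (by norm_num) hZ.le
          have : Real.log 4 = 2*l2 := by
            rw [hl2, show (4:ℝ) = 2^2 by norm_num, Real.log_pow]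
            push_cast; ring
          linarith
        have hC0 : 0 ≤ C := by rw [hCval]; linarith
        have hH := harmonic_le N hN1
        have hlogN : Real.log N ≤ L/2 := by
          rw [← hlogs]
          exact Real.log_le_log hN0 hNs
        have hHle : ∑ a ∈ Finset.Icc 1 N, (1 : ℝ)/a ≤ L/2 + γ + 1/N := by
          rw [← hγ] at hH; linarith
        have hH0 : (0:ℝ) ≤ ∑ a ∈ Finset.Icc 1 N, (1 : ℝ)/a := by
          apply Finset.sum_nonneg; intros; positivity
        have hterm1 : 2*(N:ℝ)*(1/s) ≤ 2 := by
          rw [div_eq_mul_inv] -- maybe not needed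
          have : (N:ℝ)/s ≤ 1 := by rw [div_le_one hs0]; exact hNs
          calc 2*(N:ℝ)*(1/s) = 2*((N:ℝ)/s) := by ring
          _ ≤ 2*1 := by linarith
          _ = 2 := by ring
        have hterm2 : 2*C*(∑ a ∈ Finset.Icc 1 N, (1 : ℝ)/a) ≤ 2*C*(L/2 + γ + 1/N) := by
          apply mul_le_mul_of_nonneg_left hHle (by linarith)
        -- key numeric bound
        have he : (2.71:ℝ) < Real.exp 1 := by
          have := Real.exp_one_gt_d9; linarith
        have h1N : 1/(N:ℝ) ≤ 2/s := by
          have hs2N : s/2 ≤ (N:ℝ) := by linarith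
          calc 1/(N:ℝ) ≤ 1/(s/2) := one_div_le_one_div_of_le (by linarith) hs2N
          _ = 2/s := by field_simp
        have hlog4 : L - 2*l2 ≤ s / Real.exp 1 := by
          have hlogdiv : Real.log (s/(2*Real.exp 1)) = Real.log (s/2) - 1 := by
            rw [show s/(2*Real.exp 1) = (s/2)/Real.exp 1 by ring,
              Real.log_div (by positivity) (Real.exp_ne_zero 1), Real.log_exp]
          have h := Real.log_le_sub_one_of_pos (x := s/(2*Real.exp 1)) (by positivity)
          have hs2log : Real.log (s/2) = L/2 - l2 := by
            rw [Real.log_div (by positivity) (by norm_num), hlogs, hl2]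
          have hexp0 : (0:ℝ) < Real.exp 1 := Real.exp_pos 1
          have : Real.log (s/2) ≤ s/(2*Real.exp 1) := by linarith
          rw [hs2log] at this
          rw [show s/Real.exp 1 = 2*(s/(2*Real.exp 1)) by field_simp]
          linarith
        have hkey : (L - 2*l2) * (1/(N:ℝ)) ≤ 0.365 + 2*γ*l2 := by
          apply key_numeric _ _ _ _ hγ2 hl2pos
          have hexp0 : (0:ℝ) < Real.exp 1 := Real.exp_pos 1
          have h1 : (L - 2*l2) * (1/(N:ℝ)) ≤ (s/Real.exp 1) * (2/s) :=
            mul_le_mul hlog4 h1N (by positivity) (by positivity)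
          have h2 : (s/Real.exp 1) * (2/s) = 2/Real.exp 1 := by
            field_simp
          linarith
        have h1N0 : (0:ℝ) ≤ 1/(N:ℝ) := by positivity
        have hl2nn : (0:ℝ) ≤ l2 := by linarith
        calc 2*(N:ℝ)*(1/s) + 2*C*(∑ a ∈ Finset.Icc 1 N, (1 : ℝ)/a)
            ≤ 2 + 2*C*(L/2 + γ + 1/N) := by linarith
          _ = 2 + 2*(L/2 - l2)*(L/2 + γ + 1/(N:ℝ)) := by rw [hCval]
          _ ≤ (1/2) * L^2 - (l2 - γ) * L + 2.365 :=
              final_numeric L l2 γ (1/(N:ℝ)) hkey h1N0 hl2nn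
end

section
/- For every real Z ≥ 4 one has Σ_{Z−√Z < n ≤ Z+√Z} d(n)·n^{−3/4} ≤ 2^{7/4}·Z^{−1/4}·log Z + 12.21·Z^{−1/4}, where the sum ranges over positive integers n with Z − √Z < n ≤ Z + √Z. -/
set_option maxHeartbeats 1000000

open Real

lemma harmonic_bound (m : ℕ) (hm : 2 ≤ m) :
    ∑ a ∈ Finset.Icc 1 m, ((a : ℝ))⁻¹ ≤ Real.log m + 0.81 := by
  induction m, hm using Nat.le_induction with
  | base =>
    have h2 : (0.6931471803 : ℝ) < Real.log 2 := Real.log_two_gt_d9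
    have he : (Finset.Icc 1 2 : Finset ℕ) = {1, 2} := rfl
    rw [he, Finset.sum_pair (by norm_num)]
    push_cast
    norm_num
    linarith
  | succ n hn ih =>
    rw [Finset.sum_Icc_succ_top (by omega : 1 ≤ n + 1)]
    have hn0 : (0:ℝ) < (n:ℝ) := by positivity
    have hkey : ((n:ℝ)+1)⁻¹ ≤ Real.log ((n:ℝ)+1) - Real.log n := by
      have h1 : (0:ℝ) < (n:ℝ)/((n:ℝ)+1) := by positivity
      have h2 := Real.log_le_sub_one_of_pos h1
      rw [Real.log_div (ne_of_gt hn0) (by positivity)] at h2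
      have heq : (n:ℝ)/((n:ℝ)+1) - 1 = -((n:ℝ)+1)⁻¹ := by field_simp; ring
      linarith
    push_cast
    linarith

lemma divisor_card_le (n m : ℕ) (hn : 0 < n) (h : n < (m+1)^2) :
    d n ≤ 2 * ((Finset.Icc 1 m).filter (· ∣ n)).card := by
  classical
  have key : (Finset.Icc 1 m).filter (· ∣ n) = n.divisors.filter (· ≤ m) := by
    ext a
    simp only [Finset.mem_filter, Finset.mem_Icc, Nat.mem_divisors]
    constructor
    · rintro ⟨⟨h1, h2⟩, h3⟩; exact ⟨⟨h3, hn.ne'⟩, h2⟩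
    · rintro ⟨⟨h1, _⟩, h2⟩; exact ⟨⟨Nat.pos_of_dvd_of_pos h1 hn, h2⟩, h1⟩
  rw [key]
  have hsplit : (n.divisors.filter (· ≤ m)).card + (n.divisors.filter (fun a => ¬ a ≤ m)).card
      = n.divisors.card := by
    rw [Finset.card_filter_add_card_filter_not]
  have hinj : (n.divisors.filter (fun a => ¬ a ≤ m)).card ≤ (n.divisors.filter (· ≤ m)).card := by
    apply Finset.card_le_card_of_injOn (fun a => n / a)
    · intro a ha
      simp only [Finset.mem_coe, Finset.mem_filter, Nat.mem_divisors] at ha ⊢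
      obtain ⟨⟨hdvd, hne⟩, hma⟩ := ha
      refine ⟨⟨Nat.div_dvd_of_dvd hdvd, hne⟩, ?_⟩
      by_contra hc
      push_neg at hc
      have h1 : (m+1)*(m+1) ≤ (n/a) * a := Nat.mul_le_mul hc (by omega)
      rw [Nat.div_mul_cancel hdvd] at h1
      have : (m+1)^2 = (m+1)*(m+1) := sq (m+1) ▸ by ring
      omega
    · intro a ha b hb hab
      simp only [Finset.coe_filter, Set.mem_setOf_eq, Nat.mem_divisors] at ha hb
      have h1 := Nat.div_div_self ha.1.1 hn.ne'
      have h2 := Nat.div_div_self hb.1.1 hn.ne'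
      simp only [] at hab
      rw [← h1, hab, h2]
  unfold d
  omega

/-- Explicit bound for the divisor sum `Σ_{Z−√Z < n ≤ Z+√Z} d(n)·n^{−3/4}`. -/
theorem divisor_sum_middle_bound (Z : ℝ) (hZ : 4 ≤ Z) :
    ∑ n ∈ (Finset.Icc 1 ⌊Z + Real.sqrt Z⌋₊).filter
        (fun n : ℕ => Z - Real.sqrt Z < (n:ℝ)),
        (d n : ℝ) * (n:ℝ) ^ (-(3:ℝ)/4)
      ≤ (2:ℝ) ^ ((7:ℝ)/4) * Z ^ (-(1:ℝ)/4) * Real.log Z + 12.21 * Z ^ (-(1:ℝ)/4) := by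
  have hZ0 : (0:ℝ) < Z := by linarith
  set s := Real.sqrt Z with hs
  have hs0 : (0:ℝ) ≤ s := Real.sqrt_nonneg Z
  have hssq : s^2 = Z := Real.sq_sqrt hZ0.le
  have hs2 : (2:ℝ) ≤ s := by nlinarith
  have hsZ2 : s ≤ Z/2 := by nlinarith
  set N := ⌊Z + s⌋₊ with hN
  set S := (Finset.Icc 1 N).filter (fun n : ℕ => Z - s < (n:ℝ)) with hSdef
  have hZs0 : (0:ℝ) ≤ Z + s := by linarith
  have hNle : (N:ℝ) ≤ Z + s := Nat.floor_le hZs0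
  set m := ⌊Real.sqrt (Z + s)⌋₊ with hmdef
  have hsq0 : (0:ℝ) ≤ Real.sqrt (Z+s) := Real.sqrt_nonneg _
  have hsqZs : (Real.sqrt (Z+s))^2 = Z + s := Real.sq_sqrt hZs0
  have hm2 : 2 ≤ m := by
    apply Nat.le_floor
    have : s ≤ Real.sqrt (Z+s) := by
      rw [hs]; exact Real.sqrt_le_sqrt (by linarith)
    push_cast; linarith
  have hmle : (m:ℝ) ≤ Real.sqrt (Z+s) := Nat.floor_le hsq0
  have hm0 : (0:ℝ) < (m:ℝ) := by
    have : (2:ℝ) ≤ (m:ℝ) := by exact_mod_cast hm2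
    linarith
  have hmub : (m:ℝ) ≤ 1.23 * s := by
    have h1 : Real.sqrt (Z+s) ≤ 1.23 * s := by
      rw [show (1.23 : ℝ) * s = Real.sqrt ((1.23*s)^2) by
        rw [Real.sqrt_sq (by positivity)]]
      exact Real.sqrt_le_sqrt (by nlinarith)
    linarith
  have hlogm : Real.log m ≤ Real.log Z / 2 + 1/4 := by
    have h1 : Real.log (m:ℝ) ≤ Real.log (Real.sqrt (Z+s)) := Real.log_le_log hm0 hmle
    rw [Real.log_sqrt hZs0] at h1
    have h2 : Real.log (Z+s) ≤ Real.log (3/2 * Z) := Real.log_le_log (by linarith) (by linarith)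
    rw [Real.log_mul (by norm_num) hZ0.ne'] at h2
    have h3 : Real.log (3/2) ≤ 1/2 := by
      have := Real.log_le_sub_one_of_pos (show (0:ℝ) < 3/2 by norm_num); linarith
  -- membership facts
    linarith
  have hmemS : ∀ n ∈ S, 1 ≤ n ∧ n ≤ N ∧ Z - s < (n:ℝ) := by
    intro n hn
    rw [hSdef, Finset.mem_filter, Finset.mem_Icc] at hn
    exact ⟨hn.1.1, hn.1.2, hn.2⟩
  have hnsq : ∀ n ∈ S, n < (m+1)^2 := by
    intro n hn
    obtain ⟨h1, h2, h3⟩ := hmemS n hn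
    have hlt : Real.sqrt (Z+s) < (m:ℝ) + 1 := Nat.lt_floor_add_one _
    have hcast : (n:ℝ) < ((m:ℝ)+1)^2 := by
      have : (n:ℝ) ≤ (N:ℝ) := by exact_mod_cast h2
      nlinarith
    have : (n:ℝ) < (((m+1)^2 : ℕ) : ℝ) := by push_cast; nlinarith
    exact_mod_cast this
  -- count of multiples
  have hcount : ∀ a ∈ Finset.Icc 1 m, ((S.filter (fun n => a ∣ n)).card : ℝ) ≤ 2*s/(a:ℝ) + 1 := by
    intro a ha
    rw [Finset.mem_Icc] at ha
    have ha1 : 1 ≤ a := ha.1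
    have ha0 : (0:ℝ) < (a:ℝ) := by exact_mod_cast ha1
    have hxa0 : (0:ℝ) ≤ (Z - s)/(a:ℝ) := by
      apply div_nonneg _ ha0.le; linarith
    set q := ⌊(Z - s)/(a:ℝ)⌋₊ with hq
    set p := N / a with hp
    have hsub : (S.filter (fun n => a ∣ n)).card ≤ (Finset.Ioc q p).card := by
      apply Finset.card_le_card_of_injOn (fun n => n / a)
      · intro n hn
        rw [Finset.mem_coe, Finset.mem_filter] at hn
        obtain ⟨hnS, hdvd⟩ := hn
        obtain ⟨h1, h2, h3⟩ := hmemS n hnS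
        rw [Finset.mem_coe, Finset.mem_Ioc]
        constructor
        · rw [hq, Nat.floor_lt hxa0, div_lt_iff₀ ha0]
          have : ((n / a : ℕ) : ℝ) * (a:ℝ) = (n:ℝ) := by
            rw [← Nat.cast_mul, Nat.div_mul_cancel hdvd]
          linarith [this ▸ h3]
        · exact Nat.div_le_div_right h2
      · intro n1 h1 n2 h2 he
        simp only at he
        rw [Finset.coe_filter, Set.mem_setOf_eq] at h1 h2
        have e1 := Nat.div_mul_cancel h1.2
        have e2 := Nat.div_mul_cancel h2.2
        rw [← e1, ← e2, he]
    have hcard : (Finset.Ioc q p).card = p - q := Nat.card_Ioc q p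
    have hpb : (p:ℝ) ≤ (Z+s)/(a:ℝ) := by
      calc (p:ℝ) ≤ (N:ℝ)/(a:ℝ) := Nat.cast_div_le
        _ ≤ (Z+s)/(a:ℝ) := by gcongr
    have hqb : (Z - s)/(a:ℝ) < (q:ℝ) + 1 := Nat.lt_floor_add_one _
    have hdiff : ((p - q : ℕ):ℝ) ≤ 2*s/(a:ℝ) + 1 := by
      rcases le_total q p with hle | hle
      · rw [Nat.cast_sub hle]
        have hsplit : (Z+s)/(a:ℝ) - (Z-s)/(a:ℝ) = 2*s/(a:ℝ) := by
          field_simp; ring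
        linarith
      · rw [Nat.sub_eq_zero_of_le hle]
        have : (0:ℝ) ≤ 2*s/(a:ℝ) := by positivity
        push_cast; linarith
    calc ((S.filter (fun n => a ∣ n)).card : ℝ) ≤ ((Finset.Ioc q p).card : ℝ) := by
          exact_mod_cast hsub
      _ = ((p - q : ℕ):ℝ) := by rw [hcard]
      _ ≤ 2*s/(a:ℝ) + 1 := hdiff
  -- divisor sum bound
  have hT : ∑ n ∈ S, (d n : ℝ) ≤ 4*s*(Real.log m + 0.81) + 2*(m:ℝ) := by
    have h1 : ∑ n ∈ S, (d n : ℝ) ≤ ∑ n ∈ S, 2 * (((Finset.Icc 1 m).filter (· ∣ n)).card : ℝ) := by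
      apply Finset.sum_le_sum
      intro n hn
      exact_mod_cast divisor_card_le n m (hmemS n hn).1 (hnsq n hn)
    have h2 : ∑ n ∈ S, (((Finset.Icc 1 m).filter (· ∣ n)).card : ℝ)
        = ∑ a ∈ Finset.Icc 1 m, ((S.filter (fun n => a ∣ n)).card : ℝ) := by
      simp_rw [Finset.card_filter]
      push_cast
      rw [Finset.sum_comm]
    have h3 := Finset.sum_le_sum hcount
    have h4 : ∑ a ∈ Finset.Icc 1 m, (2*s/(a:ℝ) + 1)
        = 2*s*(∑ a ∈ Finset.Icc 1 m, ((a:ℝ))⁻¹) + (m:ℝ) := by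
      rw [Finset.sum_add_distrib, Finset.sum_const, Nat.card_Icc, Nat.add_sub_cancel,
        nsmul_eq_mul, mul_one]
      congr 1
      rw [Finset.mul_sum]
      apply Finset.sum_congr rfl
      intro a _
      rw [div_eq_mul_inv]
    have h5 := harmonic_bound m hm2
    rw [← Finset.mul_sum] at h1
    rw [h2] at h1
    rw [h4] at h3
    nlinarith [hs0]
  -- pointwise rpow bound
  have hC0 : (0:ℝ) ≤ (Z/2) ^ (-(3:ℝ)/4) := Real.rpow_nonneg (by linarith) _
  have hpoint : ∀ n ∈ S, (d n : ℝ) * (n:ℝ) ^ (-(3:ℝ)/4) ≤ (d n : ℝ) * (Z/2) ^ (-(3:ℝ)/4) := by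
    intro n hn
    obtain ⟨h1, h2, h3⟩ := hmemS n hn
    have : (n:ℝ) ^ (-(3:ℝ)/4) ≤ (Z/2) ^ (-(3:ℝ)/4) :=
      Real.rpow_le_rpow_of_nonpos (by linarith) (by linarith) (by norm_num)
    exact mul_le_mul_of_nonneg_left this (by positivity)
  have hmain : ∑ n ∈ S, (d n : ℝ) * (n:ℝ) ^ (-(3:ℝ)/4)
      ≤ (∑ n ∈ S, (d n:ℝ)) * (Z/2)^(-(3:ℝ)/4) := by
    rw [Finset.sum_mul]
    exact Finset.sum_le_sum hpoint
  -- rpow arithmetic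
  set u := Z ^ ((1:ℝ)/4) with hu
  have hu0 : 0 < u := Real.rpow_pos_of_pos hZ0 _
  have hus : s = u ^ (2:ℕ) := by
    rw [hu, ← Real.rpow_natCast (Z ^ ((1:ℝ)/4)) 2, ← Real.rpow_mul hZ0.le, hs,
      Real.sqrt_eq_rpow]
    norm_num
  have hZinv : Z ^ (-(1:ℝ)/4) = u⁻¹ := by
    rw [hu, show (-(1:ℝ)/4) = -(1/4) by norm_num, Real.rpow_neg hZ0.le]
  have hC : (Z/2) ^ (-(3:ℝ)/4) = 2 ^ ((3:ℝ)/4) / u^(3:ℕ) := by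
    rw [show (-(3:ℝ)/4) = -(3/4) by norm_num, Real.rpow_neg (by linarith : (0:ℝ) ≤ Z/2),
        Real.div_rpow hZ0.le (by norm_num : (0:ℝ) ≤ 2), inv_div]
    rw [hu, ← Real.rpow_natCast (Z ^ ((1:ℝ)/4)) 3, ← Real.rpow_mul hZ0.le]
    norm_num
  have h2734 : (2:ℝ) ^ ((7:ℝ)/4) = 2 * 2 ^ ((3:ℝ)/4) := by
    rw [show ((7:ℝ)/4) = 1 + 3/4 by norm_num, Real.rpow_add (by norm_num), Real.rpow_one]
  have ha0 : (0:ℝ) < (2:ℝ)^((3:ℝ)/4) := Real.rpow_pos_of_pos two_pos _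
  have ha169 : (2:ℝ) ^ ((3:ℝ)/4) ≤ 1.69 := by
    by_contra hcon
    push_neg at hcon
    have h1 : ((2:ℝ) ^ ((3:ℝ)/4))^(4:ℕ) = 8 := by
      rw [← Real.rpow_natCast _ 4, ← Real.rpow_mul (by norm_num : (0:ℝ) ≤ 2)]
      norm_num
    have h2 : (1.69:ℝ)^(4:ℕ) < ((2:ℝ) ^ ((3:ℝ)/4))^(4:ℕ) :=
      pow_lt_pow_left₀ hcon (by norm_num) (by norm_num)
    rw [h1] at h2
    norm_num at h2
  have hlogZ : 0 ≤ Real.log Z := Real.log_nonneg (by linarith)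
  have hlogm0 : 0 ≤ Real.log (m:ℝ) := Real.log_nonneg (by exact_mod_cast hm2.trans' (by norm_num))
  -- final numeric assembly
  have hBound : 4*s*(Real.log m + 0.81) + 2*(m:ℝ) ≤ (2*Real.log Z + 6.7) * u^(2:ℕ) := by
    have hu2 : (0:ℝ) < u^(2:ℕ) := by positivity
    rw [hus] at hmub ⊢
    nlinarith [hlogm, hlogm0, hmub, hu2]
  have hup : (u^(2:ℕ):ℝ) * (2 ^ ((3:ℝ)/4) / u^(3:ℕ)) = 2 ^ ((3:ℝ)/4) * u⁻¹ := by
    field_simp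
  rw [hZinv, h2734]
  calc ∑ n ∈ S, (d n : ℝ) * (n:ℝ) ^ (-(3:ℝ)/4)
      ≤ (∑ n ∈ S, (d n:ℝ)) * (Z/2)^(-(3:ℝ)/4) := hmain
    _ ≤ ((2*Real.log Z + 6.7) * u^(2:ℕ)) * (Z/2)^(-(3:ℝ)/4) :=
        mul_le_mul_of_nonneg_right (hT.trans hBound) hC0
    _ = (2*Real.log Z + 6.7) * (2 ^ ((3:ℝ)/4) * u⁻¹) := by
        rw [hC, mul_assoc, hup]
    _ ≤ 2 * 2 ^ ((3:ℝ)/4) * u⁻¹ * Real.log Z + 12.21 * u⁻¹ := by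
        have hui : (0:ℝ) ≤ u⁻¹ := by positivity
        nlinarith [mul_nonneg (mul_nonneg hlogZ (by linarith : (0:ℝ) ≤ 1.69 - 2 ^ ((3:ℝ)/4))) hui,
          mul_nonneg (by linarith : (0:ℝ) ≤ 12.21 - 6.7 * 2 ^ ((3:ℝ)/4)) hui]
end
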